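/- arXiv:0804.3192 — 4 statements merged into one kernel-verified Lean document; each statement's English description precedes it below -/
import Mathlib

section
/- Let A be a flow-hyperbolic real d×d matrix. Then every solution e^{tA}·v with v ∉ E^s(A) ∪ E^u(A) diverges to infinity both in the future and in the past: ‖exp(tA)·v‖ → ∞ as t → +∞ and ‖exp(tA)·v‖ → ∞ as t → -∞. Moreover, for every nonzero v ∈ E^s(A), ‖exp(tA)·v‖ → ∞ as t → -∞, and for every nonzero v ∈ E^u(A), ‖exp(tA)·v‖ → ∞ as t → +∞. -/
open Filter Topology

/-- A real d×d matrix is *flow-hyperbolic* if no eigenvalue of its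
complexification has zero real part. -/
def IsFlowHyperbolic {d : ℕ} (A : Matrix (Fin d) (Fin d) ℝ) : Prop :=
  ∀ z ∈ spectrum ℂ (A.map (algebraMap ℝ ℂ)), z.re ≠ 0

/-- The matrix exponential `exp (t • A)`. -/
noncomputable def flowAt {d : ℕ} (A : Matrix (Fin d) (Fin d) ℝ) (t : ℝ) :
    Matrix (Fin d) (Fin d) ℝ :=
  NormedSpace.exp (t • A)

/-- The stable set `E^s(A)`: vectors with `exp (tA)·v → 0` as `t → +∞`. -/
def stableSet {d : ℕ} (A : Matrix (Fin d) (Fin d) ℝ) : Set (Fin d → ℝ) :=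
  {v | Tendsto (fun t : ℝ => (flowAt A t).mulVec v) atTop (nhds 0)}

/-- The unstable set `E^u(A)`: vectors with `exp (tA)·v → 0` as `t → -∞`. -/
def unstableSet {d : ℕ} (A : Matrix (Fin d) (Fin d) ℝ) : Set (Fin d → ℝ) :=
  {v | Tendsto (fun t : ℝ => (flowAt A t).mulVec v) atBot (nhds 0)}

set_option synthInstance.maxHeartbeats 1000000
set_option maxHeartbeats 1000000

open NormedSpace
open scoped Nat

namespace HypDiverge

variable {d : ℕ}

abbrev V (d : ℕ) := Fin d → ℂ

instance : IsScalarTower ℂ (V d →L[ℂ] V d) (V d →L[ℂ] V d) := by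
  constructor
  intro a f g
  show (a • f) * g = a • (f * g)
  ext x
  simp [ContinuousLinearMap.mul_apply]

instance : SMulCommClass ℂ (V d →L[ℂ] V d) (V d →L[ℂ] V d) := by
  constructor
  intro a f g
  show a • (f * g) = f * (a • g)
  ext x
  simp [ContinuousLinearMap.mul_apply]

noncomputable instance : NormedAlgebra ℚ (V d →L[ℂ] V d) :=
  NormedAlgebra.restrictScalars ℚ ℂ _

/-- flow in the Banach algebra of continuous linear endomorphisms -/
noncomputable def G (T : V d →L[ℂ] V d) (t : ℝ) : V d →L[ℂ] V d := exp ((t : ℂ) • T)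

lemma csmul_add (s t : ℂ) (T : V d →L[ℂ] V d) : (s + t) • T = s • T + t • T := by
  ext x; simp [add_mul]

lemma G_add (T : V d →L[ℂ] V d) (s t : ℝ) : G T (s + t) = G T s * G T t := by
  rw [G, G, G, Complex.ofReal_add, csmul_add]
  refine exp_add_of_commute ?_
  show _ = _
  ext x
  simp only [ContinuousLinearMap.mul_apply, map_smul, ContinuousLinearMap.smul_apply,
    Pi.smul_apply, smul_eq_mul]
  ring

lemma G_zero (T : V d →L[ℂ] V d) : G T 0 = 1 := by
  have : ((0:ℝ):ℂ) • T = 0 := by ext x; simp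
  rw [G, this]; exact exp_zero

lemma G_neg_mul (T : V d →L[ℂ] V d) (t : ℝ) : G T (-t) * G T t = 1 := by
  rw [← G_add]; simp [G_zero]

lemma G_neg_T (T : V d →L[ℂ] V d) (t : ℝ) : G (-T) t = G T (-t) := by
  rw [G, G, smul_neg, ← neg_smul, Complex.ofReal_neg]

lemma G_inv_apply (T : V d →L[ℂ] V d) (t : ℝ) (x : V d) :
    G T (-t) (G T t x) = x := by
  have h := G_neg_mul T t
  calc G T (-t) (G T t x) = (G T (-t) * G T t) x := rfl
  _ = x := by rw [h]; rfl

lemma exp_smul_one (a : ℂ) :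
    exp (a • (1 : V d →L[ℂ] V d)) = Complex.exp a • (1 : V d →L[ℂ] V d) := by
  have hc : Continuous (algebraMap ℂ (V d →L[ℂ] V d)) := continuous_algebraMap _ _
  calc exp (a • (1 : V d →L[ℂ] V d)) = exp (algebraMap ℂ _ a) := by
        rw [Algebra.algebraMap_eq_smul_one]
  _ = algebraMap ℂ _ (exp a) := (map_exp _ hc a).symm
  _ = Complex.exp a • 1 := by rw [Algebra.algebraMap_eq_smul_one, Complex.exp_eq_exp_ℂ]

lemma G_apply_eq_sum (T : V d →L[ℂ] V d) (μ : ℂ) {K : ℕ} {w : V d}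
    (hw : ((T - μ • 1) ^ K) w = 0) (t : ℝ) :
    G T t w = ∑ k ∈ Finset.range K,
      (Complex.exp ((t:ℂ) * μ) * (t:ℂ) ^ k * ((k ! : ℂ))⁻¹) • (((T - μ • 1) ^ k) w) := by
  set N : V d →L[ℂ] V d := T - μ • 1 with hN
  have hsplit : (t:ℂ) • T = ((t:ℂ) * μ) • (1 : V d →L[ℂ] V d) + (t:ℂ) • N := by
    rw [hN, smul_sub, mul_smul]
    abel_nf
  have hcomm : Commute (((t:ℂ)*μ) • (1 : V d →L[ℂ] V d)) ((t:ℂ) • N) :=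
    ((Commute.one_left N).smul_left _).smul_right _
  have hGsplit : G T t = Complex.exp ((t:ℂ)*μ) • exp ((t:ℂ) • N) := by
    rw [G, hsplit, exp_add_of_commute hcomm, exp_smul_one, smul_mul_assoc, one_mul]
  have hNk : ∀ k, K ≤ k → (N ^ k) w = 0 := by
    intro k hk
    have : N ^ k = N ^ (k - K) * N ^ K := by rw [← pow_add]; congr 1; omega
    rw [this, ContinuousLinearMap.mul_apply, hw, map_zero]
  have hsum : HasSum (fun k : ℕ => (k ! : ℂ)⁻¹ • ((((t:ℂ) • N) ^ k) w))
      (exp ((t:ℂ) • N) w) := by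
    have hs := (expSeries_summable' (𝕂 := ℂ) ((t:ℂ) • N)).hasSum
    have h2 := hs.mapL (ContinuousLinearMap.apply ℂ (V d) w)
    have h3 : exp ((t:ℂ) • N) = ∑' n : ℕ, ((n ! : ℂ))⁻¹ • ((t:ℂ) • N) ^ n := by
      rw [exp_eq_tsum ℂ]
    rw [← h3] at h2
    simpa using h2
  have hvanish : ∀ k ∉ Finset.range K, (k ! : ℂ)⁻¹ • ((((t:ℂ) • N) ^ k) w) = 0 := by
    intro k hk
    rw [Finset.mem_range, not_lt] at hk
    rw [smul_pow, ContinuousLinearMap.smul_apply, hNk k hk, smul_zero, smul_zero]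
  have hfin : exp ((t:ℂ) • N) w
      = ∑ k ∈ Finset.range K, (k ! : ℂ)⁻¹ • ((((t:ℂ) • N) ^ k) w) :=
    hsum.unique (hasSum_sum_of_ne_finset_zero hvanish)
  rw [hGsplit, ContinuousLinearMap.smul_apply, hfin, Finset.smul_sum]
  refine Finset.sum_congr rfl fun k _ => ?_
  rw [smul_pow, ContinuousLinearMap.smul_apply, smul_smul, smul_smul]
  congr 1
  ring


lemma sub_pow_apply (T : V d →L[ℂ] V d) (μ : ℂ) (K : ℕ) (w : V d) :
    (((T : Module.End ℂ (V d)) - μ • 1) ^ K) w = ((T - μ • 1) ^ K) w := by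
  induction K generalizing w with
  | zero => rfl
  | succ K ih =>
      rw [pow_succ, pow_succ, Module.End.mul_apply, ContinuousLinearMap.mul_apply]
      have h : ((T : Module.End ℂ (V d)) - μ • 1) w = (T - μ • 1) w := rfl
      rw [h, ih]

lemma mem_maxGen_iff (T : V d →L[ℂ] V d) (μ : ℂ) (w : V d) :
    w ∈ Module.End.maxGenEigenspace (T : Module.End ℂ (V d)) μ ↔
      ∃ K : ℕ, ((T - μ • 1) ^ K) w = 0 := by
  rw [Module.End.mem_maxGenEigenspace]
  exact exists_congr fun K => by rw [sub_pow_apply]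

lemma real_decay {a : ℝ} (ha : a < 0) (k : ℕ) :
    Tendsto (fun t : ℝ => Real.exp (t * a) * |t| ^ k) atTop (𝓝 0) := by
  have hna : (0:ℝ) < -a := by linarith
  have h1 : Tendsto (fun t : ℝ => (-a) * t) atTop atTop :=
    Tendsto.const_mul_atTop hna tendsto_id
  have h2 := (Real.tendsto_pow_mul_exp_neg_atTop_nhds_zero k).comp h1
  have h0 : Tendsto (fun t : ℝ => (-a)⁻¹ ^ k * (((-a) * t) ^ k * Real.exp (-((-a) * t))))
      atTop (𝓝 0) := by simpa using (h2.const_mul ((-a)⁻¹ ^ k))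
  refine h0.congr' ?_
  filter_upwards [eventually_ge_atTop (0:ℝ)] with t ht
  rw [abs_of_nonneg ht, mul_pow]
  have hne : (-a) ^ k ≠ 0 := pow_ne_zero _ (by linarith)
  have : -(-a * t) = t * a := by ring
  rw [this]
  field_simp
  rw [← mul_pow, show -(1 / a) * -a = 1 by field_simp [ha.ne], one_pow, one_mul]

lemma complex_coef_decay {μ : ℂ} (hμ : μ.re < 0) (k : ℕ) (c : ℂ) :
    Tendsto (fun t : ℝ => Complex.exp ((t:ℂ) * μ) * (t:ℂ) ^ k * c) atTop (𝓝 0) := by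
  rw [tendsto_zero_iff_norm_tendsto_zero]
  have hre : ∀ t : ℝ, ((t:ℂ) * μ).re = t * μ.re := by
    intro t; simp [Complex.mul_re]
  have heq : (fun t : ℝ => ‖Complex.exp ((t:ℂ) * μ) * (t:ℂ) ^ k * c‖)
      = fun t => (Real.exp (t * μ.re) * |t| ^ k) * ‖c‖ := by
    funext t
    rw [norm_mul, norm_mul, Complex.norm_exp, hre]
    congr 1
    rw [norm_pow, Complex.norm_real, Real.norm_eq_abs]
  rw [heq]
  simpa using (real_decay hμ k).mul_const ‖c‖


/-- algebraic stable space: sum of generalized eigenspaces with negative real part -/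
noncomputable def SS (T : V d →L[ℂ] V d) : Submodule ℂ (V d) :=
  ⨆ μ : {μ : ℂ // μ.re < 0}, Module.End.maxGenEigenspace (T : Module.End ℂ (V d)) (μ : ℂ)

lemma tendsto_G_zero_of_mem_SS (T : V d →L[ℂ] V d) {x : V d} (hx : x ∈ SS T) :
    Tendsto (fun t : ℝ => G T t x) atTop (𝓝 0) := by
  refine Submodule.iSup_induction _
    (motive := fun y => Tendsto (fun t : ℝ => G T t y) atTop (𝓝 0)) hx ?_ ?_ ?_
  · rintro ⟨μ, hμ⟩ y hyμ
    rw [mem_maxGen_iff] at hyμ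
    obtain ⟨K, hK⟩ := hyμ
    refine Tendsto.congr (fun t => (G_apply_eq_sum T μ hK t).symm) ?_
    rw [show (0 : V d) = ∑ k ∈ Finset.range K, (0 : V d) by simp]
    refine tendsto_finset_sum _ fun k _ => ?_
    have h := (complex_coef_decay hμ k ((k ! : ℂ))⁻¹).smul_const (((T - μ • 1) ^ k) y)
    simpa using h
  · simpa using (tendsto_const_nhds : Tendsto (fun _ : ℝ => (0 : V d)) atTop (𝓝 0))
  · intro y z hy hz
    have h := hy.add hz
    rw [add_zero] at h
    exact h.congr fun t => (map_add (G T t) y z).symm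

lemma maxGen_mem_invariant (T : V d →L[ℂ] V d) (μ : ℂ) (t : ℝ) {x : V d}
    (hx : x ∈ Module.End.maxGenEigenspace (T : Module.End ℂ (V d)) μ) :
    G T t x ∈ Module.End.maxGenEigenspace (T : Module.End ℂ (V d)) μ := by
  rw [mem_maxGen_iff] at hx ⊢
  obtain ⟨K, hK⟩ := hx
  refine ⟨K, ?_⟩
  have h1 : Commute (T - μ • 1) ((t:ℂ) • T) := by
    have h0 : Commute (T - μ • 1) T :=
      (Commute.refl T).sub_left (((Commute.one_left T).smul_left μ))
    exact h0.smul_right _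
  have hc : Commute ((T - μ • 1) ^ K) (G T t) := ((h1.exp_right).pow_left K)
  calc ((T - μ • 1) ^ K) (G T t x) = (((T - μ • 1) ^ K) * G T t) x := rfl
  _ = (G T t * ((T - μ • 1) ^ K)) x := by rw [hc]
  _ = G T t (((T - μ • 1) ^ K) x) := rfl
  _ = 0 := by rw [hK, map_zero]

lemma SS_invariant (T : V d →L[ℂ] V d) (t : ℝ) {x : V d} (hx : x ∈ SS T) :
    G T t x ∈ SS T := by
  refine Submodule.iSup_induction _ (motive := fun y => G T t y ∈ SS T) hx ?_ ?_ ?_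
  · rintro ⟨μ, hμ⟩ y hyμ
    have h := maxGen_mem_invariant T μ t hyμ
    exact Submodule.mem_iSup_of_mem ⟨μ, hμ⟩ h
  · show G T t 0 ∈ SS T
    rw [map_zero]; exact Submodule.zero_mem _
  · intro y z hy hz
    show G T t (y + z) ∈ SS T
    rw [map_add]; exact Submodule.add_mem _ hy hz

/-- the operator-norm trick: pointwise decay backwards on an invariant subspace forces
norm divergence forwards for nonzero vectors of the subspace. -/
lemma diverge (T : V d →L[ℂ] V d) (N : Submodule ℂ (V d))
    (hinv : ∀ t : ℝ, ∀ x ∈ N, G T t x ∈ N)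
    (hdec : ∀ w ∈ N, Tendsto (fun t : ℝ => G T (-t) w) atTop (𝓝 0))
    {u : V d} (hu : u ∈ N) (hu0 : u ≠ 0) :
    Tendsto (fun t : ℝ => ‖G T t u‖) atTop atTop := by
  classical
  have : FiniteDimensional ℂ N := inferInstance
  set b := Module.finBasis ℂ N with hb
  set m := Module.finrank ℂ N
  -- coordinate functionals as continuous linear maps
  have hcoord : ∀ i : Fin m, ∃ C : ℝ, 0 ≤ C ∧ ∀ n : N, ‖b.repr n i‖ ≤ C * ‖n‖ := by
    intro i
    refine ⟨‖LinearMap.toContinuousLinearMap (b.coord i)‖, (LinearMap.toContinuousLinearMap (b.coord i)).opNorm_nonneg, fun n => ?_⟩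
    have h := (LinearMap.toContinuousLinearMap (b.coord i)).le_opNorm n
    simpa [Module.Basis.coord_apply] using h
  choose C hC0 hC using hcoord
  set ε : ℝ → ℝ := fun t => ∑ i : Fin m, C i * ‖G T (-t) ((b i : V d))‖ with hε
  have hε0 : Tendsto ε atTop (𝓝 0) := by
    rw [show (0:ℝ) = ∑ _i : Fin m, (0:ℝ) by simp]
    refine tendsto_finset_sum _ fun i _ => ?_
    have hdecb := hdec (b i : V d) (SetLike.coe_mem _)
    have hn := (tendsto_zero_iff_norm_tendsto_zero.mp hdecb).const_mul (C i)
    simpa using hn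
  have hbound : ∀ (t : ℝ) (x : V d), x ∈ N → ‖G T (-t) x‖ ≤ ε t * ‖x‖ := by
    intro t x hxN
    set n : N := ⟨x, hxN⟩ with hn
    have hrepr : (x : V d) = ∑ i : Fin m, b.repr n i • ((b i : N) : V d) := by
      have h := b.sum_repr n
      have h2 := congrArg (Submodule.subtype N) h
      simp only [map_sum, map_smul, Submodule.subtype_apply] at h2
      exact h2.symm
    have : G T (-t) x = ∑ i : Fin m, b.repr n i • G T (-t) ((b i : N) : V d) := by
      rw [hrepr, map_sum]
      exact Finset.sum_congr rfl fun i _ => by rw [map_smul]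
    rw [this]
    calc ‖∑ i : Fin m, b.repr n i • G T (-t) ((b i : N) : V d)‖
        ≤ ∑ i : Fin m, ‖b.repr n i • G T (-t) ((b i : N) : V d)‖ := norm_sum_le _ _
    _ ≤ ∑ i : Fin m, (C i * ‖n‖) * ‖G T (-t) ((b i : N) : V d)‖ := by
        refine Finset.sum_le_sum fun i _ => ?_
        rw [norm_smul]
        exact mul_le_mul_of_nonneg_right (hC i n) (norm_nonneg _)
    _ = ε t * ‖x‖ := by
        rw [hε, Finset.sum_mul]
        refine Finset.sum_congr rfl fun i _ => ?_
        have hnx : ‖n‖ = ‖x‖ := rfl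
        rw [hnx]; ring
  -- now conclude
  rw [tendsto_atTop]
  intro Cgoal
  set C' := max Cgoal 1 with hC'
  have hC'pos : (0:ℝ) < C' := lt_of_lt_of_le one_pos (le_max_right _ _)
  have hunorm : (0:ℝ) < ‖u‖ := norm_pos_iff.mpr hu0
  have hev : ∀ᶠ t in atTop, ε t < ‖u‖ / C' := by
    exact hε0.eventually_lt_const (by positivity)
  filter_upwards [hev] with t ht
  have hXnn : (0:ℝ) ≤ ‖G T t u‖ := norm_nonneg _
  have h1 : ‖u‖ ≤ ε t * ‖G T t u‖ := by
    have := hbound t (G T t u) (hinv t u hu)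
    rwa [G_inv_apply] at this
  have h2 : ‖u‖ ≤ (‖u‖ / C') * ‖G T t u‖ :=
    h1.trans (mul_le_mul_of_nonneg_right ht.le hXnn)
  have h3 : C' ≤ ‖G T t u‖ := by
    rw [div_mul_eq_mul_div, le_div_iff₀ hC'pos] at h2
    exact (mul_le_mul_iff_right₀ hunorm).mp h2
  exact (le_max_left _ _).trans h3


lemma neg_pow_apply (S : V d →L[ℂ] V d) (K : ℕ) (w : V d) :
    ((-S) ^ K) w = ((-1:ℂ) ^ K) • ((S ^ K) w) := by
  induction K generalizing w with
  | zero => simp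
  | succ K ih =>
      have h1 : ((-S) ^ (K+1)) w = ((-S) ^ K) ((-S) w) := by rw [pow_succ]; rfl
      have h2 : ((S) ^ (K+1)) w = (S ^ K) (S w) := by rw [pow_succ]; rfl
      have h3 : (-S) w = -(S w) := rfl
      rw [h1, h2, h3, ih, map_neg, pow_succ, mul_smul, neg_one_smul]

lemma maxGen_neg (T : V d →L[ℂ] V d) (μ : ℂ) :
    Module.End.maxGenEigenspace (((-T : V d →L[ℂ] V d)) : Module.End ℂ (V d)) (-μ)
      = Module.End.maxGenEigenspace (T : Module.End ℂ (V d)) μ := by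
  ext w
  rw [mem_maxGen_iff, mem_maxGen_iff]
  refine exists_congr fun K => ?_
  have h : (-T - (-μ) • 1 : V d →L[ℂ] V d) = -(T - μ • 1) := by
    ext x i
    simp only [ContinuousLinearMap.sub_apply, ContinuousLinearMap.neg_apply,
      ContinuousLinearMap.smul_apply, ContinuousLinearMap.one_apply, Pi.sub_apply,
      Pi.neg_apply, Pi.smul_apply, smul_eq_mul]
    ring
  rw [h, neg_pow_apply]
  have hne : ((-1:ℂ) ^ K) ≠ 0 := pow_ne_zero _ (by norm_num)
  simp [smul_eq_zero, hne]

lemma mem_spectrum_of_maxGen_ne_bot {T : V d →L[ℂ] V d} {μ : ℂ}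
    (h : Module.End.maxGenEigenspace (T : Module.End ℂ (V d)) μ ≠ ⊥) :
    μ ∈ spectrum ℂ (T : Module.End ℂ (V d)) := by
  obtain ⟨x, hx, hx0⟩ := (Submodule.ne_bot_iff _).mp h
  rw [Module.End.mem_maxGenEigenspace] at hx
  obtain ⟨k, hk⟩ := hx
  have hgen : Module.End.HasGenEigenvalue (T : Module.End ℂ (V d)) μ k := by
    rw [Module.End.hasGenEigenvalue_iff]
    intro hbot
    have : x ∈ Module.End.genEigenspace (T : Module.End ℂ (V d)) μ k := by
      rw [Module.End.mem_genEigenspace_nat]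
      exact hk
    rw [hbot] at this
    exact hx0 (Submodule.mem_bot _ |>.mp this)
  exact (Module.End.hasEigenvalue_of_hasGenEigenvalue hgen).mem_spectrum

lemma sup_SS_eq_top (T : V d →L[ℂ] V d)
    (hT : ∀ μ ∈ spectrum ℂ (T : Module.End ℂ (V d)), Complex.re μ ≠ 0) :
    SS T ⊔ SS (-T) = ⊤ := by
  rw [eq_top_iff, ← Module.End.iSup_maxGenEigenspace_eq_top (T : Module.End ℂ (V d))]
  refine iSup_le fun μ => ?_
  rcases lt_trichotomy μ.re 0 with hμ | hμ | hμ
  · exact le_trans (le_iSup (fun ν : {ν : ℂ // ν.re < 0} =>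
      Module.End.maxGenEigenspace (T : Module.End ℂ (V d)) (ν : ℂ)) ⟨μ, hμ⟩) le_sup_left
  · rcases eq_or_ne (Module.End.maxGenEigenspace (T : Module.End ℂ (V d)) μ) ⊥ with hbot | hbot
    · rw [hbot]; exact bot_le
    · exact absurd hμ (hT μ (mem_spectrum_of_maxGen_ne_bot hbot))
  · have hμ' : (-μ).re < 0 := by rw [Complex.neg_re]; linarith
    have heq := maxGen_neg T μ
    refine le_trans ?_ le_sup_right
    rw [← heq]
    exact le_iSup (fun ν : {ν : ℂ // ν.re < 0} =>
      Module.End.maxGenEigenspace (((-T : V d →L[ℂ] V d)) : Module.End ℂ (V d)) (ν : ℂ)) ⟨-μ, hμ'⟩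


section Bridge

/-- complexification of a real vector -/
def cV (v : Fin d → ℝ) : V d := fun i => (v i : ℂ)

lemma cV_eq_zero {v : Fin d → ℝ} : cV v = 0 ↔ v = 0 := by
  constructor
  · intro h
    funext i
    have := congrFun h i
    simpa [cV] using this
  · intro h; funext i; simp [h, cV]

lemma norm_cV (v : Fin d → ℝ) : ‖cV v‖ = ‖v‖ := by
  rw [Pi.norm_def, Pi.norm_def]
  congr 1
  refine Finset.sup_congr rfl fun i _ => ?_
  simp [cV]

/-- matrix as continuous linear map -/
noncomputable def TT (B : Matrix (Fin d) (Fin d) ℂ) : V d →L[ℂ] V d :=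
  LinearMap.toContinuousLinearMap (Matrix.mulVecLin B)

lemma TT_apply (B : Matrix (Fin d) (Fin d) ℂ) (x : V d) : TT B x = B.mulVec x := rfl

/-- matrix → CLM as an algebra homomorphism -/
noncomputable def Ψ : Matrix (Fin d) (Fin d) ℂ →ₐ[ℂ] (V d →L[ℂ] V d) where
  toFun := TT
  map_one' := by ext x i; simp [TT_apply, Matrix.one_mulVec]
  map_mul' := fun M N => by
    ext x i
    rw [ContinuousLinearMap.mul_apply, TT_apply, TT_apply, TT_apply, Matrix.mulVec_mulVec]
  map_zero' := by ext x i; simp [TT_apply, Matrix.zero_mulVec]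
  map_add' := fun M N => by ext x i; simp [TT_apply, Matrix.add_mulVec]
  commutes' := fun c => by
    ext x i
    rw [TT_apply, Algebra.algebraMap_eq_smul_one, Algebra.algebraMap_eq_smul_one,
      Matrix.smul_mulVec, Matrix.one_mulVec]
    rfl

lemma continuous_Ψ : Continuous (Ψ (d := d)) := by
  have h := LinearMap.continuous_of_finiteDimensional (Ψ (d := d)).toLinearMap
  exact h

lemma Ψ_exp (M : Matrix (Fin d) (Fin d) ℂ) : Ψ (exp M) = exp (Ψ M) := by
  letI : SeminormedRing (Matrix (Fin d) (Fin d) ℂ) := Matrix.linftyOpSemiNormedRing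
  letI : NormedRing (Matrix (Fin d) (Fin d) ℂ) := Matrix.linftyOpNormedRing
  letI : NormedAlgebra ℂ (Matrix (Fin d) (Fin d) ℂ) := Matrix.linftyOpNormedAlgebra
  letI : NormedAlgebra ℚ (Matrix (Fin d) (Fin d) ℂ) := NormedAlgebra.restrictScalars ℚ ℂ _
  exact map_exp Ψ continuous_Ψ M

lemma G_TT (B : Matrix (Fin d) (Fin d) ℂ) (t : ℝ) (x : V d) :
    G (TT B) t x = (exp ((t:ℂ) • B)).mulVec x := by
  have h : (t:ℂ) • TT B = Ψ ((t:ℂ) • B) := by rw [map_smul]; rfl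
  rw [G, h, ← Ψ_exp]
  rfl

lemma flowAt_map (A : Matrix (Fin d) (Fin d) ℝ) (t : ℝ) :
    (flowAt A t).map (algebraMap ℝ ℂ) = exp ((t:ℂ) • A.map (algebraMap ℝ ℂ)) := by
  letI : SeminormedRing (Matrix (Fin d) (Fin d) ℝ) := Matrix.linftyOpSemiNormedRing
  letI : NormedRing (Matrix (Fin d) (Fin d) ℝ) := Matrix.linftyOpNormedRing
  letI : NormedAlgebra ℝ (Matrix (Fin d) (Fin d) ℝ) := Matrix.linftyOpNormedAlgebra
  letI : SeminormedRing (Matrix (Fin d) (Fin d) ℂ) := Matrix.linftyOpSemiNormedRing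
  letI : NormedRing (Matrix (Fin d) (Fin d) ℂ) := Matrix.linftyOpNormedRing
  letI : NormedAlgebra ℝ (Matrix (Fin d) (Fin d) ℂ) := Matrix.linftyOpNormedAlgebra
  letI : NormedAlgebra ℂ (Matrix (Fin d) (Fin d) ℂ) := Matrix.linftyOpNormedAlgebra
  letI : NormedAlgebra ℚ (Matrix (Fin d) (Fin d) ℝ) := NormedAlgebra.restrictScalars ℚ ℝ _
  set Phi : Matrix (Fin d) (Fin d) ℝ →ₐ[ℝ] Matrix (Fin d) (Fin d) ℂ :=
    AlgHom.mapMatrix (Algebra.ofId ℝ ℂ) with hPhi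
  have hPhic : Continuous Phi := by
    have h := LinearMap.continuous_of_finiteDimensional Phi.toLinearMap
    exact h
  have h1 : Phi (exp (t • A)) = exp (Phi (t • A)) := map_exp Phi hPhic _
  have h2 : Phi (t • A) = (t:ℂ) • A.map (algebraMap ℝ ℂ) := by
    rw [map_smul]
    ext i j
    simp [hPhi, AlgHom.mapMatrix_apply, Matrix.map_apply, Algebra.ofId_apply, Complex.real_smul]
  have h3 : Phi (flowAt A t) = (flowAt A t).map (algebraMap ℝ ℂ) := by
    rw [hPhi]
    ext i j
    simp [AlgHom.mapMatrix_apply, Matrix.map_apply, Algebra.ofId_apply]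
  have h4 : (exp : Matrix (Fin d) (Fin d) ℂ → _) = exp := rfl
  rw [← h3, flowAt, h1, h2, h4]

lemma cV_mulVec (M : Matrix (Fin d) (Fin d) ℝ) (v : Fin d → ℝ) :
    cV (M.mulVec v) = (M.map (algebraMap ℝ ℂ)).mulVec (cV v) := by
  funext i
  simp only [cV, Matrix.mulVec, dotProduct, Matrix.map_apply]
  push_cast
  rfl

lemma flow_cV (A : Matrix (Fin d) (Fin d) ℝ) (t : ℝ) (v : Fin d → ℝ) :
    cV ((flowAt A t).mulVec v) = G (TT (A.map (algebraMap ℝ ℂ))) t (cV v) := by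
  rw [G_TT, ← flowAt_map, ← cV_mulVec]

lemma flow_norm (A : Matrix (Fin d) (Fin d) ℝ) (t : ℝ) (v : Fin d → ℝ) :
    ‖(flowAt A t).mulVec v‖ = ‖G (TT (A.map (algebraMap ℝ ℂ))) t (cV v)‖ := by
  rw [← flow_cV, norm_cV]

end Bridge


lemma spectrum_TT (B : Matrix (Fin d) (Fin d) ℂ) :
    spectrum ℂ ((TT B : V d →L[ℂ] V d) : Module.End ℂ (V d)) = spectrum ℂ B := by
  have h1 : ((TT B : V d →L[ℂ] V d) : Module.End ℂ (V d)) = Matrix.toLinAlgEquiv' B := by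
    apply LinearMap.ext
    intro x
    rw [Matrix.toLinAlgEquiv'_apply]
    rfl
  rw [h1, AlgEquiv.spectrum_eq]

lemma tendsto_atBot_iff_neg {β : Type*} {f : ℝ → β} {l : Filter β} :
    Tendsto f atBot l ↔ Tendsto (fun t : ℝ => f (-t)) atTop l := by
  constructor
  · intro h; exact h.comp tendsto_neg_atTop_atBot
  · intro h
    have h2 := h.comp tendsto_neg_atBot_atTop
    simpa [Function.comp_def] using h2

end HypDiverge

open HypDiverge

/-- For a flow-hyperbolic matrix: solutions starting outside `E^s ∪ E^u` go to
infinity both in the future and in the past; nonzero solutions in `E^s` go to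
infinity in the past; nonzero solutions in `E^u` go to infinity in the future. -/
theorem hyperbolic_solutions_diverge {d : ℕ} (A : Matrix (Fin d) (Fin d) ℝ)
    (hA : IsFlowHyperbolic A) :
    (∀ v : Fin d → ℝ, v ∉ stableSet A ∪ unstableSet A →
      Tendsto (fun t : ℝ => ‖(flowAt A t).mulVec v‖) atTop atTop ∧
      Tendsto (fun t : ℝ => ‖(flowAt A t).mulVec v‖) atBot atTop) ∧
    (∀ v ∈ stableSet A, v ≠ 0 →
      Tendsto (fun t : ℝ => ‖(flowAt A t).mulVec v‖) atBot atTop) ∧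
    (∀ v ∈ unstableSet A, v ≠ 0 →
      Tendsto (fun t : ℝ => ‖(flowAt A t).mulVec v‖) atTop atTop) := by
  classical
  set B : Matrix (Fin d) (Fin d) ℂ := A.map (algebraMap ℝ ℂ) with hB
  set T : V d →L[ℂ] V d := TT B with hTdef
  have hspec : ∀ μ ∈ spectrum ℂ ((T : V d →L[ℂ] V d) : Module.End ℂ (V d)), Complex.re μ ≠ 0 := by
    intro μ hμ
    apply hA
    rwa [hTdef, spectrum_TT] at hμ
  have htop := sup_SS_eq_top T hspec
  set S := SS T with hSdef
  set U := SS (-T) with hUdef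
  have hSdec : ∀ x ∈ S, Tendsto (fun t : ℝ => G T t x) atTop (𝓝 0) :=
    fun x hx => tendsto_G_zero_of_mem_SS T hx
  have hUdec : ∀ x ∈ U, Tendsto (fun t : ℝ => G T (-t) x) atTop (𝓝 0) := by
    intro x hx
    exact (tendsto_G_zero_of_mem_SS (-T) hx).congr fun t => by rw [G_neg_T]
  have hSdiv : ∀ x ∈ S, x ≠ 0 → Tendsto (fun t : ℝ => ‖G T (-t) x‖) atTop atTop := by
    intro x hx hx0
    have hdiv := diverge (-T) S
      (fun t y hy => by rw [G_neg_T]; exact SS_invariant T (-t) hy)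
      (fun w hw => (hSdec w hw).congr fun t => by rw [G_neg_T, neg_neg]) hx hx0
    exact hdiv.congr fun t => by rw [G_neg_T]
  have hUdiv : ∀ x ∈ U, x ≠ 0 → Tendsto (fun t : ℝ => ‖G T t x‖) atTop atTop := by
    intro x hx hx0
    have hdiv := diverge T U
      (fun t y hy => by
        have := SS_invariant (-T) (-t) hy
        rwa [G_neg_T, neg_neg] at this)
      (fun w hw => hUdec w hw) hx hx0
    exact hdiv
  -- real-complex transfer
  have hnormfun : ∀ v : Fin d → ℝ, (fun t : ℝ => ‖(flowAt A t).mulVec v‖)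
      = fun t : ℝ => ‖G T t (cV v)‖ := by
    intro v; funext t; rw [flow_norm, hTdef, hB]
  have hsiff : ∀ v : Fin d → ℝ, v ∈ stableSet A ↔
      Tendsto (fun t : ℝ => G T t (cV v)) atTop (𝓝 0) := by
    intro v
    rw [stableSet, Set.mem_setOf_eq]
    constructor
    · intro h
      rw [tendsto_zero_iff_norm_tendsto_zero] at h ⊢
      rwa [hnormfun v] at h
    · intro h
      rw [tendsto_zero_iff_norm_tendsto_zero] at h ⊢
      rwa [hnormfun v]
  have huiff : ∀ v : Fin d → ℝ, v ∈ unstableSet A ↔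
      Tendsto (fun t : ℝ => G T (-t) (cV v)) atTop (𝓝 0) := by
    intro v
    rw [unstableSet, Set.mem_setOf_eq, tendsto_atBot_iff_neg]
    have heq : (fun t : ℝ => ‖(flowAt A (-t)).mulVec v‖) = fun t : ℝ => ‖G T (-t) (cV v)‖ := by
      funext t; rw [flow_norm, hTdef, hB]
    constructor
    · intro h
      rw [tendsto_zero_iff_norm_tendsto_zero] at h ⊢
      rwa [heq] at h
    · intro h
      rw [tendsto_zero_iff_norm_tendsto_zero] at h ⊢
      rwa [heq]
  have hdecomp : ∀ v : Fin d → ℝ, ∃ s ∈ S, ∃ u ∈ U, s + u = cV v := by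
    intro v
    have : cV v ∈ S ⊔ U := by rw [htop]; trivial
    exact Submodule.mem_sup.mp this
  refine ⟨?_, ?_, ?_⟩
  · -- outside stable ∪ unstable
    intro v hv
    obtain ⟨s, hs, u, hu, hsum⟩ := hdecomp v
    have hvs : v ∉ stableSet A := fun h => hv (Or.inl h)
    have hvu : v ∉ unstableSet A := fun h => hv (Or.inr h)
    have hu0 : u ≠ 0 := by
      rintro rfl
      apply hvs
      rw [hsiff]
      have hx : cV v = s := by rw [← hsum, add_zero]
      rw [hx]
      exact hSdec s hs
    have hs0 : s ≠ 0 := by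
      rintro rfl
      apply hvu
      rw [huiff]
      have hx : cV v = u := by rw [← hsum, zero_add]
      rw [hx]
      exact hUdec u hu
    have hGadd : ∀ t : ℝ, G T t (cV v) = G T t s + G T t u := by
      intro t; rw [← hsum, map_add]
    constructor
    · rw [hnormfun v]
      have hcomb : Tendsto (fun t : ℝ => -‖G T t s‖ + ‖G T t u‖) atTop atTop := by
        refine Filter.Tendsto.add_atTop (C := (0:ℝ)) ?_ (hUdiv u hu hu0)
        have := tendsto_zero_iff_norm_tendsto_zero.mp (hSdec s hs)
        simpa using this.neg
      refine tendsto_atTop_mono (fun t => ?_) hcomb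
      have h1 : G T t u = G T t (cV v) - G T t s := by rw [hGadd t]; abel
      have h2 : ‖G T t u‖ ≤ ‖G T t (cV v)‖ + ‖G T t s‖ := by
        rw [h1]; exact norm_sub_le _ _
      linarith
    · rw [tendsto_atBot_iff_neg]
      have : (fun t : ℝ => ‖(flowAt A (-t)).mulVec v‖) = fun t : ℝ => ‖G T (-t) (cV v)‖ := by
        funext t; rw [flow_norm, hTdef, hB]
      rw [this]
      have hcomb : Tendsto (fun t : ℝ => -‖G T (-t) u‖ + ‖G T (-t) s‖) atTop atTop := by
        refine Filter.Tendsto.add_atTop (C := (0:ℝ)) ?_ (hSdiv s hs hs0)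
        have := tendsto_zero_iff_norm_tendsto_zero.mp (hUdec u hu)
        simpa using this.neg
      refine tendsto_atTop_mono (fun t => ?_) hcomb
      have h1 : G T (-t) s = G T (-t) (cV v) - G T (-t) u := by rw [hGadd (-t)]; abel
      have h2 : ‖G T (-t) s‖ ≤ ‖G T (-t) (cV v)‖ + ‖G T (-t) u‖ := by
        rw [h1]; exact norm_sub_le _ _
      linarith
  · -- stable, nonzero: diverges in the past
    intro v hv hv0
    obtain ⟨s, hs, u, hu, hsum⟩ := hdecomp v
    have hxdec := (hsiff v).mp hv
    have hu_t0 : Tendsto (fun t : ℝ => G T t u) atTop (𝓝 0) := by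
      have heq : (fun t : ℝ => G T t u) = fun t : ℝ => G T t (cV v) - G T t s := by
        funext t; rw [← hsum, map_add]; abel
      rw [heq]
      simpa using hxdec.sub (hSdec s hs)
    have hu0 : u = 0 := by
      by_contra h
      exact not_tendsto_atTop_of_tendsto_nhds
        (tendsto_zero_iff_norm_tendsto_zero.mp hu_t0) (hUdiv u hu h)
    have hxS : cV v ∈ S := by
      rw [← hsum, hu0, add_zero]; exact hs
    have hx0 : cV v ≠ 0 := fun h => hv0 (cV_eq_zero.mp h)
    rw [tendsto_atBot_iff_neg]
    have : (fun t : ℝ => ‖(flowAt A (-t)).mulVec v‖) = fun t : ℝ => ‖G T (-t) (cV v)‖ := by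
      funext t; rw [flow_norm, hTdef, hB]
    rw [this]
    exact hSdiv _ hxS hx0
  · -- unstable, nonzero: diverges in the future
    intro v hv hv0
    obtain ⟨s, hs, u, hu, hsum⟩ := hdecomp v
    have hxdec := (huiff v).mp hv
    have hs_t0 : Tendsto (fun t : ℝ => G T (-t) s) atTop (𝓝 0) := by
      have heq : (fun t : ℝ => G T (-t) s) = fun t : ℝ => G T (-t) (cV v) - G T (-t) u := by
        funext t; rw [← hsum, map_add]; abel
      rw [heq]
      simpa using hxdec.sub (hUdec u hu)
    have hs0 : s = 0 := by
      by_contra h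
      exact not_tendsto_atTop_of_tendsto_nhds
        (tendsto_zero_iff_norm_tendsto_zero.mp hs_t0) (hSdiv s hs h)
    have hxU : cV v ∈ U := by
      rw [← hsum, hs0, zero_add]; exact hu
    have hx0 : cV v ≠ 0 := fun h => hv0 (cV_eq_zero.mp h)
    rw [hnormfun v]
    exact hUdiv _ hxU hx0
end

section
/- Let A and B be flow-hyperbolic real d×d matrices. Then there exists a C¹ diffeomorphism h : ℝ^d → ℝ^d such that h(exp(tA)·v) = exp(tB)·h(v) for all t ∈ ℝ and all v ∈ ℝ^d, if and only if there exists an invertible real d×d matrix P with B = P·A·P⁻¹. -/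
open Filter Topology

/-- If `M` semiconjugates the two matrix flows, then `M * A = B * M`. -/
lemma semiconj_of_flow_semiconj {d : ℕ} (A B M : Matrix (Fin d) (Fin d) ℝ)
    (h : ∀ t : ℝ, M * flowAt A t = flowAt B t * M) : M * A = B * M := by
  letI : SeminormedRing (Matrix (Fin d) (Fin d) ℝ) := Matrix.linftyOpSemiNormedRing
  letI : NormedRing (Matrix (Fin d) (Fin d) ℝ) := Matrix.linftyOpNormedRing
  letI : NormedAlgebra ℝ (Matrix (Fin d) (Fin d) ℝ) := Matrix.linftyOpNormedAlgebra
  have h1 : HasDerivAt (fun t : ℝ => M * flowAt A t)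
      (M * (NormedSpace.exp ((0:ℝ) • A) * A)) 0 :=
    (hasDerivAt_exp_smul_const (𝕂 := ℝ) A 0).const_mul M
  have h2 : HasDerivAt (fun t : ℝ => flowAt B t * M)
      (NormedSpace.exp ((0:ℝ) • B) * B * M) 0 :=
    (hasDerivAt_exp_smul_const (𝕂 := ℝ) B 0).mul_const M
  have heq : (fun t : ℝ => M * flowAt A t) = fun t : ℝ => flowAt B t * M :=
    funext h
  have := (heq ▸ h1).unique h2
  simpa [zero_smul, NormedSpace.exp_zero] using this

/-- Two hyperbolic linear flows are conjugate by a C¹ diffeomorphism if and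
only if the generating matrices are similar (conjugate by an invertible
matrix). -/
theorem flow_smoothly_conjugate_iff_similar {d : ℕ}
    (A B : Matrix (Fin d) (Fin d) ℝ)
    (hA : IsFlowHyperbolic A) (hB : IsFlowHyperbolic B) :
    (∃ h : (Fin d → ℝ) ≃ (Fin d → ℝ),
      ContDiff ℝ 1 h ∧ ContDiff ℝ 1 h.symm ∧
      ∀ (t : ℝ) (v : Fin d → ℝ),
        h ((flowAt A t).mulVec v) = (flowAt B t).mulVec (h v)) ↔
    (∃ P : Matrix (Fin d) (Fin d) ℝ, IsUnit P.det ∧ B = P * A * P⁻¹) := by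
  constructor
  · rintro ⟨h, hc, hcs, hconj⟩
    -- the derivative of `h` at 0, and of `h.symm` at `h 0`
    have hd : Differentiable ℝ h := hc.differentiable one_ne_zero
    have hds : Differentiable ℝ h.symm := hcs.differentiable one_ne_zero
    set L1 := fderiv ℝ h 0 with hL1
    set L2 := fderiv ℝ h.symm (h 0) with hL2
    -- chain rule: L2 ∘ L1 = id and L1 ∘ L2 = id
    have hcomp1 : L2.comp L1 = ContinuousLinearMap.id ℝ (Fin d → ℝ) := by
      have h1 : HasFDerivAt (h.symm ∘ h) (L2.comp L1) 0 :=
        ((hds (h 0)).hasFDerivAt).comp 0 ((hd 0).hasFDerivAt)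
      have h2 : HasFDerivAt (h.symm ∘ h) (ContinuousLinearMap.id ℝ (Fin d → ℝ)) 0 := by
        have : (h.symm ∘ h) = id := by funext x; simp
        rw [this]; exact hasFDerivAt_id 0
      exact h1.unique h2
    have hcomp2 : L1.comp L2 = ContinuousLinearMap.id ℝ (Fin d → ℝ) := by
      have h0 : h.symm (h 0) = 0 := h.symm_apply_apply 0
      have h1 : HasFDerivAt (h ∘ h.symm) (L1.comp L2) (h 0) := by
        have := ((hd (h.symm (h 0))).hasFDerivAt).comp (h 0) ((hds (h 0)).hasFDerivAt)
        rwa [h0] at this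
      have h2 : HasFDerivAt (h ∘ h.symm) (ContinuousLinearMap.id ℝ (Fin d → ℝ)) (h 0) := by
        have : (h ∘ h.symm) = id := by funext x; simp
        rw [this]; exact hasFDerivAt_id (h 0)
      exact h1.unique h2
    -- differentiating the conjugacy in `v` at `v = 0`
    have key : ∀ t : ℝ,
        L1.comp ((flowAt A t).mulVecLin.toContinuousLinearMap) =
        ((flowAt B t).mulVecLin.toContinuousLinearMap).comp L1 := by
      intro t
      set LA := (flowAt A t).mulVecLin.toContinuousLinearMap with hLA
      set LB := (flowAt B t).mulVecLin.toContinuousLinearMap with hLB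
      have hA0 : LA (0 : Fin d → ℝ) = 0 := map_zero _
      have h1 : HasFDerivAt (fun v => h (LA v)) (L1.comp LA) 0 := by
        have := ((hd (LA 0)).hasFDerivAt).comp 0 (LA.hasFDerivAt (x := (0 : Fin d → ℝ)))
        rwa [hA0] at this
      have h2 : HasFDerivAt (fun v => LB (h v)) (LB.comp (fderiv ℝ h 0)) 0 :=
        (LB.hasFDerivAt).comp 0 ((hd 0).hasFDerivAt)
      have heq : (fun v => h (LA v)) = fun v => LB (h v) := by
        funext v
        simpa [hLA, hLB] using hconj t v
      rw [heq] at h1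
      exact h1.unique h2
    -- pass to matrices
    set M := LinearMap.toMatrix' (L1 : (Fin d → ℝ) →ₗ[ℝ] (Fin d → ℝ)) with hM
    set N := LinearMap.toMatrix' (L2 : (Fin d → ℝ) →ₗ[ℝ] (Fin d → ℝ)) with hN
    have hNM : N * M = 1 := by
      rw [hM, hN, ← LinearMap.toMatrix'_comp]
      have : ((L2 : (Fin d → ℝ) →ₗ[ℝ] (Fin d → ℝ)).comp
          (L1 : (Fin d → ℝ) →ₗ[ℝ] (Fin d → ℝ)))
          = (LinearMap.id : (Fin d → ℝ) →ₗ[ℝ] (Fin d → ℝ)) := by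
        rw [← ContinuousLinearMap.toLinearMap_comp, hcomp1]; rfl
      rw [this, LinearMap.toMatrix'_id]
    have hMdet : IsUnit M.det := Matrix.isUnit_det_of_left_inverse hNM
    have hsemi : ∀ t : ℝ, M * flowAt A t = flowAt B t * M := by
      intro t
      have := key t
      have hlin : ((L1 : (Fin d → ℝ) →ₗ[ℝ] (Fin d → ℝ)).comp (flowAt A t).mulVecLin)
          = ((flowAt B t).mulVecLin.comp (L1 : (Fin d → ℝ) →ₗ[ℝ] (Fin d → ℝ))) := by
        have := congrArg (fun L : (Fin d → ℝ) →L[ℝ] (Fin d → ℝ) =>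
          (L : (Fin d → ℝ) →ₗ[ℝ] (Fin d → ℝ))) this
        simpa [ContinuousLinearMap.coe_comp, LinearMap.coe_toContinuousLinearMap] using this
      have := congrArg LinearMap.toMatrix' hlin
      rw [LinearMap.toMatrix'_comp, LinearMap.toMatrix'_comp] at this
      simpa [hM, LinearMap.toMatrix'_toLin', ← Matrix.toLin'_apply'] using this
    have hMA : M * A = B * M := semiconj_of_flow_semiconj A B M hsemi
    refine ⟨M, hMdet, ?_⟩
    calc B = B * (M * M⁻¹) := by rw [Matrix.mul_nonsing_inv M hMdet, mul_one]
    _ = B * M * M⁻¹ := by rw [mul_assoc]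
    _ = M * A * M⁻¹ := by rw [← hMA]
  · rintro ⟨P, hP, hBP⟩
    haveI : Invertible P := P.invertibleOfIsUnitDet hP
    have hPinv : P⁻¹ = ⅟P := (Matrix.invOf_eq_nonsing_inv P).symm
    -- the flows are conjugate by P
    have hflow : ∀ t : ℝ, flowAt B t = P * flowAt A t * P⁻¹ := by
      intro t
      have : (t : ℝ) • B = P * (t • A) * P⁻¹ := by
        rw [hBP, Matrix.mul_smul, Matrix.smul_mul]
      rw [flowAt, flowAt, this, hPinv]
      simpa using Matrix.exp_units_conj (unitOfInvertible P) (t • A)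
    refine ⟨Equiv.mk (fun v => P.mulVec v) (fun v => P⁻¹.mulVec v) ?_ ?_, ?_, ?_, ?_⟩
    · intro v
      simp [Matrix.mulVec_mulVec, Matrix.nonsing_inv_mul P hP]
    · intro v
      simp [Matrix.mulVec_mulVec, Matrix.mul_nonsing_inv P hP]
    · exact (P.mulVecLin.toContinuousLinearMap).contDiff
    · exact (P⁻¹.mulVecLin.toContinuousLinearMap).contDiff
    · intro t v
      simp only [Equiv.coe_fn_mk, Matrix.mulVec_mulVec]
      rw [hflow t, Matrix.mul_assoc, Matrix.nonsing_inv_mul P hP, Matrix.mul_one]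
end

section
/- The torus automorphism f_A induced by the matrix [[2,1],[1,1]] is transitive: there exists a point z ∈ T² whose forward orbit {f_A^n(z) : n ∈ ℕ} is dense in T². -/
open Filter Topology

/-- The 2-torus `T² = (ℝ/ℤ) × (ℝ/ℤ)`. -/
abbrev Torus2 := UnitAddCircle × UnitAddCircle

/-- The torus automorphism induced by the linear map `A(x,y) = (2x+y, x+y)`
of `ℝ²` (which preserves the lattice `ℤ²` and hence descends to the
quotient). -/
noncomputable def torusCatMap (p : Torus2) : Torus2 :=
  (2 • p.1 + p.2, p.1 + p.2)

open Set

section Birkhoff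

/-- Birkhoff transitivity theorem. -/
theorem birkhoff_trans {X : Type*} [TopologicalSpace X] [SecondCountableTopology X]
    [BaireSpace X] [Nonempty X] {f : X → X} (hf : Continuous f)
    (h : ∀ U V : Set X, IsOpen U → IsOpen V → U.Nonempty → V.Nonempty →
      ∃ n : ℕ, (U ∩ f^[n] ⁻¹' V).Nonempty) :
    ∃ z : X, Dense (Set.range fun n : ℕ => f^[n] z) := by
  obtain ⟨B, hBc, hBne, hB⟩ := TopologicalSpace.exists_countable_basis X
  set D : Set X → Set X := fun V => ⋃ n : ℕ, f^[n] ⁻¹' V with hD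
  have hDopen : ∀ V ∈ B, IsOpen (D V) := fun V hV =>
    isOpen_iUnion fun n => (hB.isOpen hV).preimage (hf.iterate n)
  have hDdense : ∀ V ∈ B, Dense (D V) := by
    intro V hV
    rw [dense_iff_inter_open]
    intro U hU hUne
    obtain ⟨n, x, hxU, hxV⟩ := h U V hU (hB.isOpen hV) hUne
      (nonempty_iff_ne_empty.2 fun he => hBne (he ▸ hV))
    exact ⟨x, hxU, mem_iUnion.2 ⟨n, hxV⟩⟩
  have hG : Dense (⋂ V ∈ B, D V) := dense_biInter_of_isOpen hDopen hBc hDdense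
  obtain ⟨z, hz⟩ := hG.nonempty
  refine ⟨z, dense_iff_inter_open.2 fun U hU hUne => ?_⟩
  obtain ⟨x, hx⟩ := hUne
  obtain ⟨V, hVB, hxV, hVU⟩ := hB.exists_subset_of_mem_open hx hU
  obtain ⟨n, hn⟩ := mem_iUnion.1 (mem_iInter₂.1 hz V hVB)
  exact ⟨f^[n] z, hVU hn, ⟨n, rfl⟩⟩

end Birkhoff

section GoldenArith

noncomputable def sφ : ℝ := (Real.sqrt 5 - 1) / 2
noncomputable def lφ : ℝ := (3 + Real.sqrt 5) / 2

lemma sqrt5_sq : Real.sqrt 5 ^ 2 = 5 := Real.sq_sqrt (by norm_num)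

lemma irr_s : Irrational sφ := by
  have h5 : Irrational (Real.sqrt 5) := (by norm_num : Nat.Prime 5).irrational_sqrt
  have : Irrational (Real.sqrt 5 - 1) := by simpa using h5.sub_intCast 1
  simpa [sφ, div_eq_mul_inv] using this.mul_ratCast (by norm_num : ((2:ℚ)⁻¹ : ℚ) ≠ 0)

lemma one_lt_lφ : 1 < lφ := by
  have : 1 < Real.sqrt 5 := by
    nlinarith [sqrt5_sq, Real.sqrt_nonneg 5]
  unfold lφ; linarith

lemma key1 : 2 + sφ = lφ := by unfold sφ lφ; ring
lemma key2 : lφ * sφ = 1 + sφ := by unfold sφ lφ; nlinarith [sqrt5_sq]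

/-- The subgroup ℤ + ℤsφ of ℝ. -/
noncomputable def ZZs : AddSubgroup ℝ where
  carrier := {x | ∃ m k : ℤ, x = m + k * sφ}
  add_mem' := by
    rintro a b ⟨m, k, rfl⟩ ⟨m', k', rfl⟩
    exact ⟨m + m', k + k', by push_cast; ring⟩
  zero_mem' := ⟨0, 0, by simp⟩
  neg_mem' := by
    rintro a ⟨m, k, rfl⟩
    exact ⟨-m, -k, by push_cast; ring⟩

lemma dense_ZZs : Dense (ZZs : Set ℝ) := by
  rcases ZZs.dense_or_cyclic with h | ⟨a, ha⟩
  · exact h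
  · exfalso
    have h1 : (1 : ℝ) ∈ ZZs := ⟨1, 0, by simp⟩
    have hs : sφ ∈ ZZs := ⟨0, 1, by simp⟩
    rw [ha, AddSubgroup.mem_closure_singleton] at h1 hs
    obtain ⟨n, hn⟩ := h1
    obtain ⟨m, hm⟩ := hs
    have hn' : (n : ℝ) * a = 1 := by rw [← hn]; simp [zsmul_eq_mul]
    have hm' : (m : ℝ) * a = sφ := by rw [← hm]; simp [zsmul_eq_mul]
    have hnne : (n : ℝ) ≠ 0 := by
      intro h; rw [h, zero_mul] at hn'; exact one_ne_zero hn'.symm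
    exact irr_s ⟨(m : ℚ) / (n : ℚ), by
      push_cast
      field_simp
      have h2 : (m:ℝ) = sφ * n := by
        calc (m:ℝ) = (m:ℝ) * ((n:ℝ)*a) := by rw [hn']; ring
        _ = ((m:ℝ)*a)*n := by ring
        _ = sφ * n := by rw [hm']
      linarith⟩

end GoldenArith

section TorusGeom

noncomputable def tpr (u : ℝ × ℝ) : Torus2 := ((u.1 : UnitAddCircle), (u.2 : UnitAddCircle))

lemma tpr_add (u v : ℝ × ℝ) : tpr (u + v) = tpr u + tpr v := by
  simp [tpr, Prod.ext_iff]

lemma tpr_continuous : Continuous tpr :=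
  ((AddCircle.continuous_mk' 1).comp continuous_fst).prodMk
    ((AddCircle.continuous_mk' 1).comp continuous_snd)

lemma tpr_surjective : Function.Surjective tpr := by
  rintro ⟨x, y⟩
  obtain ⟨a, rfl⟩ := Quotient.exists_rep x
  obtain ⟨b, rfl⟩ := Quotient.exists_rep y
  exact ⟨(a, b), rfl⟩

lemma coe_add_int (a : ℝ) (k : ℤ) : ((a + k : ℝ) : UnitAddCircle) = (a : UnitAddCircle) := by
  have hk : ((k : ℝ) : UnitAddCircle) = 0 :=
    (AddCircle.coe_eq_zero_iff 1).2 ⟨k, by simp⟩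
  rw [AddCircle.coe_add, hk, add_zero]

/-- The unstable line direction. -/
noncomputable def vφ : ℝ × ℝ := ((1 : ℝ), sφ)

noncomputable def lineT (t : ℝ) : Torus2 := tpr (t • vφ)

lemma lineT_eq (t : ℝ) : lineT t = ((t : UnitAddCircle), ((t * sφ : ℝ) : UnitAddCircle)) := by
  simp [lineT, tpr, vφ, Prod.smul_mk, smul_eq_mul]

lemma dense_kr : Dense (range fun k : ℤ => (((k : ℝ) * sφ : ℝ) : UnitAddCircle)) := by
  have hsur : Function.Surjective ((↑) : ℝ → UnitAddCircle) := fun x => Quotient.exists_rep x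
  have hq : DenseRange ((↑) : ℝ → UnitAddCircle) := hsur.denseRange
  have himg : Dense (((↑) : ℝ → UnitAddCircle) '' ZZs) :=
    hq.dense_image (AddCircle.continuous_mk' 1) dense_ZZs
  refine himg.mono ?_
  rintro x ⟨r, ⟨m, k, rfl⟩, rfl⟩
  refine ⟨k, ?_⟩
  show (((k : ℝ) * sφ : ℝ) : UnitAddCircle) = ((↑m + ↑k * sφ : ℝ) : UnitAddCircle)
  rw [← coe_add_int ((k : ℝ) * sφ) m]
  congr 1
  ring

lemma dense_line : Dense (range lineT) := by
  rw [dense_iff_inter_open]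
  intro U hU hUne
  obtain ⟨z, hz⟩ := hUne
  obtain ⟨⟨a, b⟩, rfl⟩ := tpr_surjective z
  obtain ⟨O1, hO1, O2, hO2, hsub⟩ := mem_nhds_prod_iff.1 (hU.mem_nhds hz)
  obtain ⟨o1, h1sub, h1open, ha⟩ := mem_nhds_iff.1 hO1
  obtain ⟨o2, h2sub, h2open, hb⟩ := mem_nhds_iff.1 hO2
  -- find k with ↑(k sφ) ∈ translate of o2
  set c : UnitAddCircle := ((b : UnitAddCircle)) - ((a * sφ : ℝ) : UnitAddCircle) with hc
  have hOp : IsOpen ((fun w : UnitAddCircle => ((a * sφ : ℝ) : UnitAddCircle) + w) ⁻¹' o2) :=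
    h2open.preimage (continuous_const.add continuous_id)
  have hcmem : c ∈ (fun w : UnitAddCircle => ((a * sφ : ℝ) : UnitAddCircle) + w) ⁻¹' o2 := by
    simp only [mem_preimage, hc]
    simpa using hb
  obtain ⟨w, hw, k, rfl⟩ := dense_iff_inter_open.1 dense_kr _ hOp ⟨c, hcmem⟩
  have hmem : lineT (a + k) ∈ O1 ×ˢ O2 := by
    rw [lineT_eq, Set.mem_prod]
    constructor
    · show ((a + (k:ℝ) : ℝ) : UnitAddCircle) ∈ O1
      rw [coe_add_int a k]
      exact h1sub ha
    · show (((a + (k:ℝ)) * sφ : ℝ) : UnitAddCircle) ∈ O2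
      rw [show ((a + (k:ℝ)) * sφ) = a * sφ + (k:ℝ) * sφ by ring, AddCircle.coe_add]
      exact h2sub (by simpa using hw)
  exact ⟨lineT (a + k), hsub hmem, ⟨a + k, rfl⟩⟩

lemma uniform_hit {V : Set Torus2} (hV : IsOpen V) (hne : V.Nonempty) :
    ∃ T : ℝ, ∀ p : Torus2, ∃ t : ℝ, |t| ≤ T ∧ p + lineT t ∈ V := by
  have hcover : (univ : Set Torus2) ⊆ ⋃ t : ℝ, (fun p : Torus2 => p + lineT t) ⁻¹' V := by
    intro p _
    obtain ⟨v0, hv0⟩ := hne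
    have hopen : IsOpen ((fun w : Torus2 => p + w) ⁻¹' V) :=
      hV.preimage (continuous_const.add continuous_id)
    have hnon : ((fun w : Torus2 => p + w) ⁻¹' V).Nonempty :=
      ⟨v0 - p, by simp [hv0]⟩
    obtain ⟨w, hw, t, rfl⟩ := dense_iff_inter_open.1 dense_line _ hopen hnon
    exact mem_iUnion.2 ⟨t, by simpa using hw⟩
  obtain ⟨I, hI⟩ := isCompact_univ.elim_finite_subcover
    (fun t : ℝ => (fun p : Torus2 => p + lineT t) ⁻¹' V)
    (fun t => hV.preimage (continuous_id.add continuous_const)) hcover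
  obtain ⟨T, hT⟩ := (I.image abs).exists_le
  refine ⟨T, fun p => ?_⟩
  obtain ⟨t, htI, htp⟩ := mem_iUnion₂.1 (hI (mem_univ p))
  exact ⟨t, hT _ (Finset.mem_image_of_mem abs htI), htp⟩

end TorusGeom

section Dynamics

noncomputable def Fmap (u : ℝ × ℝ) : ℝ × ℝ := (2 * u.1 + u.2, u.1 + u.2)

lemma tpr_cat (u : ℝ × ℝ) : torusCatMap (tpr u) = tpr (Fmap u) := by
  have h1 : (2 : ℕ) • ((u.1 : ℝ) : UnitAddCircle) = ((2 * u.1 : ℝ) : UnitAddCircle) := by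
    rw [← AddCircle.coe_nsmul]
    norm_num
  simp only [torusCatMap, tpr, Fmap]
  rw [Prod.ext_iff]
  exact ⟨by rw [h1, ← AddCircle.coe_add], by rw [← AddCircle.coe_add]⟩

lemma tpr_cat_iter (n : ℕ) (u : ℝ × ℝ) :
    torusCatMap^[n] (tpr u) = tpr (Fmap^[n] u) := by
  induction n generalizing u with
  | zero => rfl
  | succ n ih =>
    rw [Function.iterate_succ_apply, Function.iterate_succ_apply, tpr_cat, ih]

lemma Fmap_line (p : ℝ × ℝ) (c : ℝ) :
    Fmap (p + c • vφ) = Fmap p + (c * lφ) • vφ := by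
  simp only [Fmap, vφ, Prod.smul_mk, smul_eq_mul, Prod.mk_add_mk, Prod.ext_iff,
    Prod.fst_add, Prod.snd_add]
  constructor
  · linear_combination c * key1
  · linear_combination (-c) * key2

lemma Fmap_iter_line (n : ℕ) (u : ℝ × ℝ) (t : ℝ) :
    Fmap^[n] (u + t • vφ) = Fmap^[n] u + (t * lφ ^ n) • vφ := by
  induction n generalizing u t with
  | zero => simp
  | succ n ih =>
    rw [Function.iterate_succ_apply', Function.iterate_succ_apply', ih, Fmap_line,
      show t * lφ ^ n * lφ = t * lφ ^ (n + 1) by ring]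

lemma cat_continuous : Continuous torusCatMap := by
  unfold torusCatMap
  fun_prop

end Dynamics

/-- The torus automorphism induced by `[[2,1],[1,1]]` is transitive: some
point has dense forward orbit. -/
theorem torusCatMap_transitive :
    ∃ z : Torus2, Dense (Set.range fun n : ℕ => torusCatMap^[n] z) := by
  apply birkhoff_trans cat_continuous
  intro U V hU hV hUne hVne
  obtain ⟨T, hT⟩ := uniform_hit hV hVne
  obtain ⟨z0, hz0⟩ := hUne
  obtain ⟨u0, rfl⟩ := tpr_surjective z0
  -- continuity of the segment through u0 in direction vφ
  have hg : Continuous fun t : ℝ => tpr (u0 + t • vφ) :=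
    tpr_continuous.comp (continuous_const.add (continuous_id.smul continuous_const))
  have hev : ∀ᶠ t in 𝓝 (0 : ℝ), tpr (u0 + t • vφ) ∈ U := by
    have h0 : tpr (u0 + (0 : ℝ) • vφ) ∈ U := by simpa using hz0
    exact hg.continuousAt.eventually_mem (hU.mem_nhds h0)
  obtain ⟨δ, hδpos, hδ⟩ := Metric.eventually_nhds_iff.1 hev
  have hl1 : (1 : ℝ) < lφ := one_lt_lφ
  obtain ⟨n, hn⟩ := pow_unbounded_of_one_lt (2 * T / δ) hl1
  have hlpos : (0 : ℝ) < lφ ^ n := pow_pos (lt_trans one_pos hl1) n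
  obtain ⟨σ, hσT, hσ⟩ := hT (tpr (Fmap^[n] u0))
  have hT0 : 0 ≤ T := le_trans (abs_nonneg σ) hσT
  set t : ℝ := σ / lφ ^ n with htdef
  have ht : |t| < δ := by
    have h1 : |t| = |σ| / lφ ^ n := by rw [htdef, abs_div, abs_of_pos hlpos]
    have h2 : |σ| / lφ ^ n ≤ T / lφ ^ n := by gcongr
    have h3 : 2 * T < lφ ^ n * δ := (div_lt_iff₀ hδpos).1 hn
    have h4 : T / lφ ^ n < δ := (div_lt_iff₀ hlpos).2 (by nlinarith)
    linarith [h1 ▸ h2]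
  have hxU : tpr (u0 + t • vφ) ∈ U := hδ (by simpa [Real.dist_eq] using ht)
  refine ⟨n, tpr (u0 + t • vφ), hxU, ?_⟩
  show torusCatMap^[n] (tpr (u0 + t • vφ)) ∈ V
  rw [tpr_cat_iter, Fmap_iter_line, tpr_add]
  have hts : t * lφ ^ n = σ := div_mul_cancel₀ σ (ne_of_gt hlpos)
  rw [hts]
  exact hσ
end

section
/- Let f : ℝ^d → ℝ^d be a C¹ diffeomorphism with a fixed point p such that Df_p is invertible and map-hyperbolic. Then there exist β > 0, C > 0 and 0 < λ < 1 such that every x in the local stable set W^s_β(p) satisfies ‖f^n(x) - p‖ ≤ C·λ^n·‖x - p‖ for all n ≥ 0; consequently, a point z ∈ ℝ^d satisfies f^n(z) → p as n → ∞ if and only if f^n(z) ∈ W^s_β(p) for some n ≥ 0. -/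
open Filter Topology


lemma aux_biSup_disjoint_biSup {α : Type*} {ι : Type*} [CompleteLattice α] [IsModularLattice α]
    {t : ι → α} (ht : iSupIndep t) (hfin : {i | t i ≠ ⊥}.Finite)
    {A B : Set ι} (hAB : Disjoint A B) :
    Disjoint (⨆ i ∈ A, t i) (⨆ i ∈ B, t i) := by
  have key : ∀ s : Set ι, s.Finite → Disjoint s B →
      Disjoint (⨆ i ∈ s, t i) (⨆ i ∈ B, t i) := by
    intro s hs
    refine Set.Finite.induction_on (motive := fun s _ => Disjoint s B → Disjoint (⨆ i ∈ s, t i) (⨆ i ∈ B, t i)) s hs ?_ ?_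
    · intro _; simp
    · intro a s' ha hs' ih hdisj
      have hdb : Disjoint s' B := hdisj.mono_left (Set.subset_insert a s')
      have haB : a ∉ B := fun hb => (Set.disjoint_left.mp hdisj (Set.mem_insert a s')) hb
      have has' : a ∉ s' ∪ B := fun h => h.elim ha haB
      have hta : Disjoint (t a) ((⨆ i ∈ s', t i) ⊔ ⨆ i ∈ B, t i) := by
        refine Disjoint.mono_right ?_ (ht.disjoint_biSup has')
        exact sup_le (biSup_mono Set.subset_union_left) (biSup_mono Set.subset_union_right)
      rw [iSup_insert]
      exact (ih hdb).disjoint_sup_left_of_disjoint_sup_right hta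
  have hrw : (⨆ i ∈ A, t i) = ⨆ i ∈ A ∩ {i | t i ≠ ⊥}, t i := by
    refine le_antisymm (iSup₂_le fun i hi => ?_) (biSup_mono Set.inter_subset_left)
    by_cases h : t i = ⊥
    · simp [h]
    · exact le_biSup _ ⟨hi, h⟩
  rw [hrw]
  exact key _ (hfin.subset Set.inter_subset_right) (hAB.mono_left Set.inter_subset_left)

lemma aux_hasEigenvalue_of_mem_spectrum_clm {V : Type*} [NormedAddCommGroup V]
    [NormedSpace ℂ V] [FiniteDimensional ℂ V] (a : V →ₗ[ℂ] V) {z : ℂ}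
    (hz : z ∈ spectrum ℂ (LinearMap.toContinuousLinearMap a)) :
    Module.End.HasEigenvalue a z := by
  by_contra h
  have hz' : z ∉ spectrum ℂ a := fun hmem =>
    h (Module.End.hasEigenvalue_iff_mem_spectrum.mpr hmem)
  rw [spectrum.notMem_iff] at hz'
  obtain ⟨g, hg1, hg2⟩ := isUnit_iff_exists.mp hz'
  apply hz
  rw [resolventSet, Set.mem_setOf_eq]
  refine isUnit_iff_exists.mpr ⟨LinearMap.toContinuousLinearMap g, ?_, ?_⟩
  · ext v
    have := DFunLike.congr_fun hg1 v
    simpa [Module.algebraMap_end_apply, Module.End.mul_apply, Algebra.algebraMap_eq_smul_one,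
      ContinuousLinearMap.mul_apply] using this
  · ext v
    have := DFunLike.congr_fun hg2 v
    simpa [Module.algebraMap_end_apply, Module.End.mul_apply, Algebra.algebraMap_eq_smul_one,
      ContinuousLinearMap.mul_apply] using this
lemma aux_pow_apply {V : Type*} [NormedAddCommGroup V]
    [NormedSpace ℂ V] [FiniteDimensional ℂ V] (a : V →ₗ[ℂ] V) (m : ℕ) (v : V) :
    ((LinearMap.toContinuousLinearMap a) ^ m) v = (a ^ m) v := by
  induction m generalizing v with
  | zero => simp
  | succ m ih =>
    rw [pow_succ, pow_succ, ContinuousLinearMap.mul_apply, Module.End.mul_apply]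
    rw [show (LinearMap.toContinuousLinearMap a) v = a v from rfl, ih]

lemma aux_exists_pow_contraction {V : Type*} [NormedAddCommGroup V] [NormedSpace ℂ V]
    [FiniteDimensional ℂ V] (a : V →ₗ[ℂ] V)
    (ha : ∀ μ : ℂ, Module.End.HasEigenvalue a μ → ‖μ‖ < 1) :
    ∃ m : ℕ, 0 < m ∧ ∃ lam : ℝ, 0 < lam ∧ lam < 1 ∧ ∀ v, ‖(a ^ m) v‖ ≤ lam ^ m * ‖v‖ := by
  rcases subsingleton_or_nontrivial V with hV | hV
  · refine ⟨1, one_pos, 1/2, by norm_num, by norm_num, fun v => ?_⟩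
    have : (a ^ 1) v = 0 := Subsingleton.elim _ _
    rw [this, norm_zero]
    positivity
  · set c := LinearMap.toContinuousLinearMap a with hc
    have hcomp : CompleteSpace V := FiniteDimensional.complete ℂ V
    have hrad : spectralRadius ℂ c < 1 := by
      have h1 : spectralRadius ℂ c < (1 : NNReal) := by
        apply spectrum.spectralRadius_lt_of_forall_lt
        intro z hzmem
        have := ha z (aux_hasEigenvalue_of_mem_spectrum_clm a hzmem)
        simpa [← NNReal.coe_lt_coe] using this
      simpa using h1
    obtain ⟨l, hl1, hl2⟩ := ENNReal.lt_iff_exists_nnreal_btwn.mp hrad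
    have htends := spectrum.pow_nnnorm_pow_one_div_tendsto_nhds_spectralRadius c
    have hev : ∀ᶠ n : ℕ in atTop, (‖c ^ n‖₊ : ENNReal) ^ (1 / (n : ℝ)) < (l : ENNReal) :=
      htends.eventually_lt_const hl1
    obtain ⟨m, hmev, hm1⟩ := (hev.and (eventually_ge_atTop 1)).exists
    have hm0 : 0 < m := hm1
    have hmne : (m : ℝ) ≠ 0 := by positivity
    have hlt : (‖c ^ m‖₊ : ENNReal) < (l : ENNReal) ^ (m : ℝ) := by
      have h2 := ENNReal.rpow_lt_rpow hmev (by positivity : (0:ℝ) < (m:ℝ))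
      rwa [← ENNReal.rpow_mul, one_div, inv_mul_cancel₀ hmne, ENNReal.rpow_one] at h2
    have hl0 : 0 < l := by
      rcases eq_or_lt_of_le (zero_le : (0:NNReal) ≤ l) with h | h
      · exfalso; rw [← h] at hl1; simp at hl1
      · exact h
    have hnorm : ‖c ^ m‖ ≤ (l : ℝ) ^ m := by
      have : (‖c ^ m‖₊ : ENNReal) < ((l ^ m : NNReal) : ENNReal) := by
        rwa [← ENNReal.coe_rpow_of_nonneg l (by positivity : (0:ℝ) ≤ (m:ℝ)),
          NNReal.rpow_natCast] at hlt
      have h3 : ‖c ^ m‖₊ ≤ l ^ m := le_of_lt (by exact_mod_cast this)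
      calc ‖c ^ m‖ = ((‖c ^ m‖₊ : NNReal) : ℝ) := rfl
        _ ≤ ((l ^ m : NNReal) : ℝ) := by exact_mod_cast h3
        _ = (l : ℝ) ^ m := by push_cast; ring
    refine ⟨m, hm0, l, by exact_mod_cast hl0, by exact_mod_cast hl2, fun v => ?_⟩
    calc ‖(a ^ m) v‖ = ‖(c ^ m) v‖ := by rw [aux_pow_apply]
      _ ≤ ‖c ^ m‖ * ‖v‖ := ContinuousLinearMap.le_opNorm _ v
      _ ≤ (l:ℝ) ^ m * ‖v‖ := by
          apply mul_le_mul_of_nonneg_right hnorm (norm_nonneg v)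
lemma aux_exists_adapted_norm {V : Type*} [NormedAddCommGroup V] [NormedSpace ℂ V]
    [FiniteDimensional ℂ V] (a : V →ₗ[ℂ] V)
    (ha : ∀ μ : ℂ, Module.End.HasEigenvalue a μ → ‖μ‖ < 1) :
    ∃ lam : ℝ, 0 < lam ∧ lam < 1 ∧ ∃ (N : V → ℝ) (K : ℝ), 0 < K ∧
      (∀ w, ‖w‖ ≤ N w) ∧ (∀ w, N w ≤ K * ‖w‖) ∧ (∀ v w, N (v + w) ≤ N v + N w) ∧
      (∀ w, N (-w) = N w) ∧ (∀ w, N (a w) ≤ lam * N w) := by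
  obtain ⟨m, hm, lam, hl0, hl1, hc⟩ := aux_exists_pow_contraction a ha
  set N : V → ℝ := fun w => ∑ k ∈ Finset.range m, ‖(a ^ k) w‖ / lam ^ k with hN
  set K : ℝ := (∑ k ∈ Finset.range m, ‖LinearMap.toContinuousLinearMap (a ^ k)‖ / lam ^ k) + 1
    with hK
  have hpow : ∀ k : ℕ, (0:ℝ) < lam ^ k := fun k => pow_pos hl0 k
  have hterm : ∀ (k : ℕ) (w : V), 0 ≤ ‖(a ^ k) w‖ / lam ^ k := fun k w =>
    div_nonneg (norm_nonneg _) (hpow k).le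
  have hlow : ∀ w, ‖w‖ ≤ N w := by
    intro w
    have h0 : ‖(a ^ 0) w‖ / lam ^ 0 = ‖w‖ := by simp
    calc ‖w‖ = ‖(a ^ 0) w‖ / lam ^ 0 := h0.symm
      _ ≤ N w := Finset.single_le_sum (fun k _ => hterm k w) (Finset.mem_range.mpr hm)
  have hup : ∀ w, N w ≤ K * ‖w‖ := by
    intro w
    have h1 : N w ≤ (∑ k ∈ Finset.range m,
        ‖LinearMap.toContinuousLinearMap (a ^ k)‖ / lam ^ k) * ‖w‖ := by
      rw [Finset.sum_mul]
      refine Finset.sum_le_sum fun k _ => ?_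
      rw [div_mul_eq_mul_div]
      gcongr
      exact (LinearMap.toContinuousLinearMap (a ^ k)).le_opNorm w
    calc N w ≤ _ := h1
      _ ≤ K * ‖w‖ := by
          apply mul_le_mul_of_nonneg_right _ (norm_nonneg w)
          rw [hK]; linarith
  have hKpos : 0 < K := by
    rw [hK]
    have : (0:ℝ) ≤ ∑ k ∈ Finset.range m, ‖LinearMap.toContinuousLinearMap (a ^ k)‖ / lam ^ k :=
      Finset.sum_nonneg fun k _ => div_nonneg (norm_nonneg _) (hpow k).le
    linarith
  have hadd : ∀ v w, N (v + w) ≤ N v + N w := by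
    intro v w
    rw [hN, ← Finset.sum_add_distrib]
    refine Finset.sum_le_sum fun k _ => ?_
    rw [← add_div]
    gcongr
    rw [map_add]
    exact norm_add_le _ _
  have hneg : ∀ w, N (-w) = N w := by
    intro w
    simp [hN]
  have hcontr : ∀ w, N (a w) ≤ lam * N w := by
    intro w
    set g : ℕ → ℝ := fun j => ‖(a ^ j) w‖ / lam ^ j with hg
    have hNg : N w = ∑ j ∈ Finset.range m, g j := rfl
    have h1 : N (a w) = ∑ k ∈ Finset.range m, lam * g (k + 1) := by
      rw [hN]
      refine Finset.sum_congr rfl fun k _ => ?_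
      rw [hg]
      have : (a ^ k) (a w) = (a ^ (k+1)) w := by
        rw [pow_succ, Module.End.mul_apply]
      rw [this]
      field_simp
      ring
    have h2 : ∑ k ∈ Finset.range m, g (k + 1) = N w + g m - g 0 := by
      have h3 := Finset.sum_range_succ' g m
      have h4 := Finset.sum_range_succ g m
      rw [h4] at h3
      rw [hNg]
      linarith
    have h5 : g m ≤ g 0 := by
      rw [hg]
      simp only [pow_zero, div_one]
      rw [div_le_iff₀ (hpow m)]
      simpa [mul_comm] using hc w
    rw [h1, ← Finset.mul_sum, h2]
    have hle : N w + g m - g 0 ≤ N w := by linarith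
    exact mul_le_mul_of_nonneg_left hle hl0.le
  exact ⟨lam, hl0, hl1, N, K, hKpos, hlow, hup, hadd, hneg, hcontr⟩

lemma aux_cone_lemma (σ υ : ℕ → ℝ) (lamS c B ilamU : ℝ)
    (hσ0 : ∀ n, 0 ≤ σ n) (hυ0 : ∀ n, 0 ≤ υ n)
    (hlamS : 0 ≤ lamS) (hc : 0 ≤ c)
    (hμ1 : lamS + 2 * c < 1) (hμ'1 : 1 < ilamU - 2 * c)
    (hB : ∀ n, υ n ≤ B)
    (hrecσ : ∀ n, σ (n + 1) ≤ lamS * σ n + c * (σ n + υ n))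
    (hrecυ : ∀ n, ilamU * υ n - c * (σ n + υ n) ≤ υ (n + 1)) :
    ∀ n, υ n ≤ σ n ∧ σ (n + 1) ≤ (lamS + 2 * c) * σ n := by
  have hμ'0 : (0:ℝ) < ilamU - 2 * c := lt_trans one_pos hμ'1
  have main : ∀ n, υ n ≤ σ n := by
    by_contra hcon
    push_neg at hcon
    obtain ⟨N, hN⟩ := hcon
    have hυN : 0 < υ N := lt_of_le_of_lt (hσ0 N) hN
    have grow : ∀ j, σ (N + j) < υ (N + j) ∧ (ilamU - 2*c) ^ j * υ N ≤ υ (N + j) := by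
      intro j
      induction j with
      | zero => simpa using hN
      | succ j ih =>
        obtain ⟨h1, h2⟩ := ih
        have hσn := hσ0 (N + j)
        have hυn := hυ0 (N + j)
        have hr1 := hrecσ (N + j)
        have hr2 := hrecυ (N + j)
        have hup : (ilamU - 2*c) * υ (N + j) ≤ υ (N + j + 1) := by nlinarith
        have hσn1 : σ (N + j + 1) < υ (N + j + 1) := by nlinarith
        refine ⟨hσn1, ?_⟩
        have : (ilamU - 2*c) ^ (j+1) * υ N = (ilamU - 2*c) * ((ilamU - 2*c) ^ j * υ N) := by
          ring
        rw [this]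
        calc (ilamU - 2*c) * ((ilamU - 2*c) ^ j * υ N)
            ≤ (ilamU - 2*c) * υ (N + j) := by nlinarith
          _ ≤ υ (N + j + 1) := hup
    obtain ⟨j, hj⟩ := pow_unbounded_of_one_lt (B / υ N) hμ'1
    have h2 := (grow j).2
    have h3 := hB (N + j)
    have h4 : B < (ilamU - 2*c) ^ j * υ N := by rwa [div_lt_iff₀ hυN] at hj
    linarith
  intro n
  refine ⟨main n, ?_⟩
  have h1 := hrecσ n
  have h2 := main n
  have h3 := hσ0 n
  nlinarith

/-- A real d×d matrix is *map-hyperbolic* if no eigenvalue of its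
complexification has modulus 1. -/
def IsMapHyperbolic {d : ℕ} (C : Matrix (Fin d) (Fin d) ℝ) : Prop :=
  ∀ z ∈ spectrum ℂ (C.map (algebraMap ℝ ℂ)), ‖z‖ ≠ 1

/-- The derivative of `f` at `p`, as a d×d matrix. -/
noncomputable def derivMatrix {d : ℕ} (f : (Fin d → ℝ) → (Fin d → ℝ))
    (p : Fin d → ℝ) : Matrix (Fin d) (Fin d) ℝ :=
  LinearMap.toMatrix' ((fderiv ℝ f p : (Fin d → ℝ) →ₗ[ℝ] (Fin d → ℝ)))

/-- The local stable set of size `β` of a fixed point `p`. -/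
def localStableSet {d : ℕ} (f : (Fin d → ℝ) → (Fin d → ℝ))
    (p : Fin d → ℝ) (β : ℝ) : Set (Fin d → ℝ) :=
  {x | ∀ n : ℕ, ‖f^[n] x - p‖ ≤ β}

set_option maxHeartbeats 2000000 in
/-- On a small local stable set of a hyperbolic fixed point, orbits converge
to the fixed point exponentially fast; consequently an orbit converges to `p`
iff it eventually enters the local stable set. -/
theorem local_stable_set_contraction {d : ℕ}
    (f g : (Fin d → ℝ) → (Fin d → ℝ))
    (hf : ContDiff ℝ 1 f) (hg : ContDiff ℝ 1 g)
    (hgf : Function.LeftInverse g f) (hfg : Function.RightInverse g f)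
    (p : Fin d → ℝ) (hp : f p = p)
    (hinv : IsUnit (derivMatrix f p).det)
    (hhyp : IsMapHyperbolic (derivMatrix f p)) :
    ∃ β > (0 : ℝ), ∃ C > (0 : ℝ), ∃ lam : ℝ, 0 < lam ∧ lam < 1 ∧
      (∀ x ∈ localStableSet f p β, ∀ n : ℕ,
        ‖f^[n] x - p‖ ≤ C * lam ^ n * ‖x - p‖) ∧
      (∀ z : Fin d → ℝ,
        Tendsto (fun n : ℕ => f^[n] z) atTop (nhds p) ↔
        ∃ n : ℕ, f^[n] z ∈ localStableSet f p β) := by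
  classical
  set Df : (Fin d → ℝ) →L[ℝ] (Fin d → ℝ) := fderiv ℝ f p with hDf
  have hmulVec : ∀ v, (derivMatrix f p).mulVec v = Df v := by
    intro v
    have h1 : Matrix.toLin' (derivMatrix f p) v
        = ((Df : (Fin d → ℝ) →ₗ[ℝ] (Fin d → ℝ))) v := by
      rw [derivMatrix, Matrix.toLin'_toMatrix']
    rw [← Matrix.toLin'_apply, h1]
    rfl
  set Mc : Matrix (Fin d) (Fin d) ℂ := (derivMatrix f p).map (algebraMap ℝ ℂ) with hMc
  set T : (Fin d → ℂ) →ₗ[ℂ] (Fin d → ℂ) := Matrix.toLinAlgEquiv' Mc with hT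
  have hspecT : spectrum ℂ T = spectrum ℂ Mc := AlgEquiv.spectrum_eq Matrix.toLinAlgEquiv' Mc
  have heig : ∀ μ : ℂ, Module.End.HasEigenvalue T μ → ‖μ‖ ≠ 1 := by
    intro μ h
    exact hhyp μ (by rw [← hspecT] ; exact Module.End.hasEigenvalue_iff_mem_spectrum.mp h)
  -- complexified inclusion
  set incl : (Fin d → ℝ) → (Fin d → ℂ) := fun v i => (v i : ℂ) with hincl
  have hincl_add : ∀ v w, incl (v + w) = incl v + incl w := by
    intro v w; funext i; simp [hincl]
  have hincl_norm : ∀ v, ‖incl v‖ = ‖v‖ := by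
    intro v
    rw [Pi.norm_def, Pi.norm_def]
    congr 1
    apply Finset.sup_congr rfl
    intro i _
    simp [hincl]
  have hTincl : ∀ v, T (incl v) = incl (Df v) := by
    intro v
    have h1 : T (incl v) = Mc.mulVec (incl v) := rfl
    funext i
    rw [h1]
    have h2 : (incl (Df v)) i = (((derivMatrix f p).mulVec v i : ℝ) : ℂ) := by
      rw [hmulVec]
    rw [h2]
    simp [Matrix.mulVec, dotProduct, hMc, Matrix.map_apply, hincl]
  -- eigenspaces
  set Eμ : ℂ → Submodule ℂ (Fin d → ℂ) := fun μ => Module.End.maxGenEigenspace T μ with hEμ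
  have hEind : iSupIndep Eμ := Module.End.independent_maxGenEigenspace T
  have hEfin : {μ | Eμ μ ≠ ⊥}.Finite := WellFoundedGT.finite_ne_bot_of_iSupIndep hEind
  set sA : Set ℂ := {μ | ‖μ‖ < 1} with hsA
  set sB : Set ℂ := {μ | 1 < ‖μ‖} with hsB
  set S : Submodule ℂ (Fin d → ℂ) := ⨆ μ ∈ sA, Eμ μ with hS
  set U : Submodule ℂ (Fin d → ℂ) := ⨆ μ ∈ sB, Eμ μ with hU
  have hEinva : ∀ μ, ∀ y ∈ Eμ μ, T y ∈ Eμ μ := fun μ y hy =>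
    Module.End.mapsTo_maxGenEigenspace_of_comm (Commute.refl T) μ hy
  have hSinv : ∀ y ∈ S, T y ∈ S := by
    intro y hy
    have hle : S ≤ Submodule.comap T S := by
      refine iSup₂_le fun μ hμ => ?_
      intro w hw
      exact Submodule.mem_comap.mpr
        (le_iSup₂ (f := fun μ (_ : μ ∈ sA) => Eμ μ) μ hμ (hEinva μ w hw))
    exact hle hy
  have hUinv : ∀ y ∈ U, T y ∈ U := by
    intro y hy
    have hle : U ≤ Submodule.comap T U := by
      refine iSup₂_le fun μ hμ => ?_
      intro w hw
      exact Submodule.mem_comap.mpr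
        (le_iSup₂ (f := fun μ (_ : μ ∈ sB) => Eμ μ) μ hμ (hEinva μ w hw))
    exact hle hy
  have hmemE : ∀ (μ : ℂ) (w : Fin d → ℂ), T w = μ • w → w ∈ Eμ μ := by
    intro μ w hw
    rw [hEμ]
    refine (Module.End.mem_maxGenEigenspace T μ w).mpr ⟨1, ?_⟩
    simp [pow_one, LinearMap.sub_apply, hw]
  have hEbot : ∀ μ, ‖μ‖ = 1 → Eμ μ = ⊥ := by
    intro μ hμ
    by_contra hne
    obtain ⟨y, hy, hy0⟩ := Submodule.exists_mem_ne_zero_of_ne_bot hne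
    obtain ⟨k, hk⟩ := (Module.End.mem_maxGenEigenspace T μ y).mp hy
    have hgen : Module.End.HasGenEigenvalue T μ k := by
      rw [Module.End.HasGenEigenvalue, Module.End.HasUnifEigenvalue, Submodule.ne_bot_iff]
      exact ⟨y, Module.End.mem_genEigenspace_nat.mpr (LinearMap.mem_ker.mpr hk), hy0⟩
    exact heig μ (Module.End.hasEigenvalue_of_hasGenEigenvalue hgen) hμ
  have hcompl : IsCompl S U := by
    constructor
    · exact aux_biSup_disjoint_biSup hEind hEfin
        (Set.disjoint_left.mpr fun μ h1 h2 => absurd h2 (by simp [hsA, hsB] at h1 ⊢; linarith))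
    · rw [codisjoint_iff]
      refine le_antisymm le_top ?_
      rw [← Module.End.iSup_maxGenEigenspace_eq_top T]
      refine iSup_le fun μ => ?_
      rcases lt_trichotomy (‖μ‖) 1 with h | h | h
      · exact le_trans (le_iSup₂ (f := fun μ (_ : μ ∈ sA) => Eμ μ) μ h) le_sup_left
      · rw [show Module.End.maxGenEigenspace T μ = Eμ μ from rfl, hEbot μ h]
        exact bot_le
      · exact le_trans (le_iSup₂ (f := fun μ (_ : μ ∈ sB) => Eμ μ) μ h) le_sup_right
  -- projections
  set projS := Submodule.projectionOnto S U hcompl with hprojS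
  set projU := Submodule.projectionOnto U S hcompl.symm with hprojU
  have hadd : ∀ y, ((projS y : Fin d → ℂ)) + ((projU y : Fin d → ℂ)) = y := fun y =>
    Submodule.projection_add_projection_eq_self hcompl y
  have hPSS : ∀ w (hw : w ∈ S), (projS w : Fin d → ℂ) = w := fun w hw =>
    congrArg Subtype.val (Submodule.projectionOnto_apply_left hcompl ⟨w, hw⟩)
  have hPSU : ∀ w, w ∈ U → projS w = 0 := fun w hw =>
    Submodule.projectionOnto_apply_of_mem_right hcompl hw
  have hPUU : ∀ w (hw : w ∈ U), (projU w : Fin d → ℂ) = w := fun w hw =>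
    congrArg Subtype.val (Submodule.projectionOnto_apply_left hcompl.symm ⟨w, hw⟩)
  have hPUS : ∀ w, w ∈ S → projU w = 0 := fun w hw =>
    Submodule.projectionOnto_apply_of_mem_right hcompl.symm hw
  set aS : S →ₗ[ℂ] S := T.restrict hSinv with haS
  set bU : U →ₗ[ℂ] U := T.restrict hUinv with hbU
  have hcommS : ∀ y, (projS (T y) : Fin d → ℂ) = T (projS y : Fin d → ℂ) := by
    intro y
    have h0 : T y = T (projS y : Fin d → ℂ) + T (projU y : Fin d → ℂ) := by
      rw [← map_add, hadd]
    rw [h0, map_add, Submodule.coe_add, hPSS _ (hSinv _ (projS y).2),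
      hPSU _ (hUinv _ (projU y).2)]
    simp
  have hcommU : ∀ y, (projU (T y) : Fin d → ℂ) = T (projU y : Fin d → ℂ) := by
    intro y
    have h0 : T y = T (projS y : Fin d → ℂ) + T (projU y : Fin d → ℂ) := by
      rw [← map_add, hadd]
    rw [h0, map_add, Submodule.coe_add, hPUU _ (hUinv _ (projU y).2),
      hPUS _ (hSinv _ (projS y).2)]
    simp
  have haSproj : ∀ y, projS (T y) = aS (projS y) := fun y =>
    Subtype.ext (by rw [hcommS y]; rfl)
  have hbUproj : ∀ y, projU (T y) = bU (projU y) := fun y =>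
    Subtype.ext (by rw [hcommU y]; rfl)
  -- eigenvalues of the restrictions
  have haS_eig : ∀ ν : ℂ, Module.End.HasEigenvalue aS ν → ‖ν‖ < 1 := by
    intro ν hν
    obtain ⟨w, hw⟩ := hν.exists_hasEigenvector
    have happ : T (w : Fin d → ℂ) = ν • (w : Fin d → ℂ) := by
      have h2 : ((aS w : S) : Fin d → ℂ) = T (w : Fin d → ℂ) := rfl
      rw [← h2, hw.apply_eq_smul, Submodule.coe_smul]
    by_contra hcon
    have hnmem : ν ∉ sA := by
      rw [hsA]; simp only [Set.mem_setOf_eq, not_lt] at hcon ⊢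
      exact hcon
    have hdisj : Disjoint (Eμ ν) S := hEind.disjoint_biSup hnmem
    have hw0 : (w : Fin d → ℂ) = 0 :=
      (Submodule.disjoint_def.mp hdisj) _ (hmemE ν _ happ) w.2
    exact hw.2 (Submodule.coe_eq_zero.mp hw0)
  have hUinj : Function.Injective bU := by
    rw [← LinearMap.ker_eq_bot, Submodule.eq_bot_iff]
    intro w hw
    have h1 : bU w = 0 := LinearMap.mem_ker.mp hw
    have hTw : T (w : Fin d → ℂ) = 0 := by
      have h2 : ((bU w : U) : Fin d → ℂ) = T (w : Fin d → ℂ) := rfl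
      rw [← h2, h1, Submodule.coe_zero]
    have hmem0 : (w : Fin d → ℂ) ∈ Eμ 0 := hmemE 0 _ (by simp [hTw])
    have h0B : (0 : ℂ) ∉ sB := by simp [hsB]
    have hdisj : Disjoint (Eμ 0) U := hEind.disjoint_biSup h0B
    exact Submodule.coe_eq_zero.mp (Submodule.disjoint_def.mp hdisj _ hmem0 w.2)
  have hUbij : Function.Bijective bU := ⟨hUinj, LinearMap.injective_iff_surjective.mp hUinj⟩
  set eU : U ≃ₗ[ℂ] U := LinearEquiv.ofBijective bU hUbij with heU
  set binv : U →ₗ[ℂ] U := (eU.symm : U ≃ₗ[ℂ] U).toLinearMap with hbinv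
  have hbinv_bU : ∀ u : U, binv (bU u) = u := by
    intro u
    show eU.symm (bU u) = u
    have h1 : bU u = eU u := by rw [heU, LinearEquiv.ofBijective_apply]
    rw [h1, eU.symm_apply_apply]
  have hbinv_eig : ∀ ζ : ℂ, Module.End.HasEigenvalue binv ζ → ‖ζ‖ < 1 := by
    intro ζ hζ
    obtain ⟨w, hw⟩ := hζ.exists_hasEigenvector
    have happ : eU.symm w = ζ • w := hw.apply_eq_smul
    have hw' : w = ζ • bU w := by
      conv_lhs => rw [← eU.apply_symm_apply w, happ, map_smul]
      rw [heU, LinearEquiv.ofBijective_apply]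
    have hζ0 : ζ ≠ 0 := by
      intro h0
      rw [h0, zero_smul] at hw'
      exact hw.2 hw'
    have hbUw : bU w = ζ⁻¹ • w := by
      have h2 : ζ⁻¹ • w = ζ⁻¹ • (ζ • bU w) := by rw [← hw']
      rw [h2, smul_smul, inv_mul_cancel₀ hζ0, one_smul]
    have happ2 : T (w : Fin d → ℂ) = ζ⁻¹ • (w : Fin d → ℂ) := by
      have h2 : ((bU w : U) : Fin d → ℂ) = T (w : Fin d → ℂ) := rfl
      rw [← h2, hbUw, Submodule.coe_smul]
    have hmem : (w : Fin d → ℂ) ∈ Eμ ζ⁻¹ := hmemE _ _ happ2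
    have hgt : 1 < ‖ζ⁻¹‖ := by
      by_contra hcon
      have hnmem : ζ⁻¹ ∉ sB := by rw [hsB]; simpa using hcon
      have hdisj : Disjoint (Eμ ζ⁻¹) U := hEind.disjoint_biSup hnmem
      exact hw.2 (Submodule.coe_eq_zero.mp
        (Submodule.disjoint_def.mp hdisj _ hmem w.2))
    have h1 : ‖ζ‖ * ‖ζ⁻¹‖ = 1 := by
      rw [← norm_mul, mul_inv_cancel₀ hζ0, norm_one]
    nlinarith [norm_nonneg ζ]
  -- adapted norms
  obtain ⟨lamS, hlS0, hlS1, Ns, Ks, hKs0, hNs_low, hNs_up, hNs_add, hNs_neg, hNs_contr⟩ :=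
    aux_exists_adapted_norm aS haS_eig
  obtain ⟨lamU, hlU0, hlU1, Nu, Ku, hKu0, hNu_low, hNu_up, hNu_add, hNu_neg, hNu_contr⟩ :=
    aux_exists_adapted_norm binv hbinv_eig
  have hNu_exp : ∀ u : U, Nu u ≤ lamU * Nu (bU u) := by
    intro u
    have := hNu_contr (bU u)
    rwa [hbinv_bU u] at this
  -- projection bounds
  have hnormS : ∀ w : S, ‖(w : Fin d → ℂ)‖ = ‖w‖ := fun w => rfl
  have hnormU : ∀ w : U, ‖(w : Fin d → ℂ)‖ = ‖w‖ := fun w => rfl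
  set CS : ℝ := ‖LinearMap.toContinuousLinearMap (S.subtype ∘ₗ projS)‖ + 1 with hCS
  set CU : ℝ := ‖LinearMap.toContinuousLinearMap (U.subtype ∘ₗ projU)‖ + 1 with hCU
  have hCS0 : 0 < CS := by rw [hCS]; positivity
  have hCU0 : 0 < CU := by rw [hCU]; positivity
  have hCSle : ∀ y, ‖(projS y : Fin d → ℂ)‖ ≤ CS * ‖y‖ := by
    intro y
    have h1 := (LinearMap.toContinuousLinearMap (S.subtype ∘ₗ projS)).le_opNorm y
    have h2 : (LinearMap.toContinuousLinearMap (S.subtype ∘ₗ projS)) y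
        = (projS y : Fin d → ℂ) := rfl
    rw [h2] at h1
    calc ‖(projS y : Fin d → ℂ)‖ ≤ ‖LinearMap.toContinuousLinearMap (S.subtype ∘ₗ projS)‖ * ‖y‖ := h1
      _ ≤ CS * ‖y‖ := by
          apply mul_le_mul_of_nonneg_right _ (norm_nonneg y)
          rw [hCS]; linarith
  have hCUle : ∀ y, ‖(projU y : Fin d → ℂ)‖ ≤ CU * ‖y‖ := by
    intro y
    have h1 := (LinearMap.toContinuousLinearMap (U.subtype ∘ₗ projU)).le_opNorm y
    have h2 : (LinearMap.toContinuousLinearMap (U.subtype ∘ₗ projU)) y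
        = (projU y : Fin d → ℂ) := rfl
    rw [h2] at h1
    calc ‖(projU y : Fin d → ℂ)‖ ≤ ‖LinearMap.toContinuousLinearMap (U.subtype ∘ₗ projU)‖ * ‖y‖ := h1
      _ ≤ CU * ‖y‖ := by
          apply mul_le_mul_of_nonneg_right _ (norm_nonneg y)
          rw [hCU]; linarith
  -- constants
  set K : ℝ := max (Ks * CS) (Ku * CU) with hK
  have hK0 : 0 < K := lt_max_of_lt_left (mul_pos hKs0 hCS0)
  have hlUinv : 1 < lamU⁻¹ := by
    have h := mul_inv_cancel₀ (ne_of_gt hlU0)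
    have h2 : 0 < lamU⁻¹ := inv_pos.mpr hlU0
    nlinarith
  set ε : ℝ := min ((1 - lamS) / (4 * K + 1)) ((lamU⁻¹ - 1) / (4 * K + 1)) with hε
  have hε0 : 0 < ε := by
    apply lt_min
    · apply div_pos (by linarith) (by linarith)
    · apply div_pos (by linarith) (by linarith)
  have hεK1 : lamS + 2 * (ε * K) < 1 := by
    have h1 : ε ≤ (1 - lamS) / (4 * K + 1) := min_le_left _ _
    have h2 : ε * (4 * K + 1) ≤ 1 - lamS := by
      rw [← le_div_iff₀ (by linarith : (0:ℝ) < 4 * K + 1)]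
      exact h1
    nlinarith
  have hεK2 : 1 < lamU⁻¹ - 2 * (ε * K) := by
    have h1 : ε ≤ (lamU⁻¹ - 1) / (4 * K + 1) := min_le_right _ _
    have h2 : ε * (4 * K + 1) ≤ lamU⁻¹ - 1 := by
      rw [← le_div_iff₀ (by linarith : (0:ℝ) < 4 * K + 1)]
      exact h1
    nlinarith
  -- choice of β
  have hDfc : Continuous (fun y => fderiv ℝ f y) := hf.continuous_fderiv one_ne_zero
  obtain ⟨δ, hδ0, hδ⟩ := Metric.continuousAt_iff.mp hDfc.continuousAt ε hε0
  set β : ℝ := δ / 2 with hβ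
  have hβ0 : 0 < β := by rw [hβ]; positivity
  have hDfnear : ∀ y : Fin d → ℝ, ‖y - p‖ ≤ β → ‖fderiv ℝ f y - Df‖ ≤ ε := by
    intro y hy
    have h1 : dist y p < δ := by
      rw [dist_eq_norm]
      rw [hβ] at hy
      linarith
    have h2 := hδ h1
    rw [dist_eq_norm] at h2
    exact le_of_lt h2
  have hrem : ∀ h : Fin d → ℝ, ‖h‖ ≤ β → ‖f (p + h) - p - Df h‖ ≤ ε * ‖h‖ := by
    intro h hh
    have hconv : Convex ℝ (Metric.closedBall p β) := convex_closedBall p β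
    have hmem1 : p ∈ Metric.closedBall p β := Metric.mem_closedBall_self hβ0.le
    have hmem2 : p + h ∈ Metric.closedBall p β := by
      rw [Metric.mem_closedBall, dist_eq_norm]
      simpa using hh
    have hdiff : ∀ y ∈ Metric.closedBall p β, DifferentiableAt ℝ f y := fun y _ =>
      hf.differentiable one_ne_zero y
    have hbound : ∀ y ∈ Metric.closedBall p β, ‖fderiv ℝ f y - Df‖ ≤ ε := fun y hy =>
      hDfnear y (by rwa [← dist_eq_norm, ← Metric.mem_closedBall])
    have hmain := hconv.norm_image_sub_le_of_norm_fderiv_le' hdiff hbound hmem1 hmem2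
    have he1 : p + h - p = h := by abel
    rw [he1, hp] at hmain
    exact hmain
  set μfin : ℝ := lamS + 2 * (ε * K) with hμfin
  have hμ0 : 0 < μfin := by
    rw [hμfin]
    have : 0 ≤ 2 * (ε * K) := by positivity
    linarith
  have main : ∀ x ∈ localStableSet f p β, ∀ n : ℕ,
      ‖f^[n] x - p‖ ≤ (2 * K + 1) * μfin ^ n * ‖x - p‖ := by
    intro x hx
    have hxn : ∀ n, ‖f^[n] x - p‖ ≤ β := hx
    set X : ℕ → (Fin d → ℂ) := fun n => incl (f^[n] x - p) with hX
    have hXnorm : ∀ n, ‖X n‖ = ‖f^[n] x - p‖ := fun n => hincl_norm _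
    set σ : ℕ → ℝ := fun n => Ns (projS (X n)) with hσ
    set υ : ℕ → ℝ := fun n => Nu (projU (X n)) with hυ
    have hσ0 : ∀ n, 0 ≤ σ n := fun n => le_trans (norm_nonneg _) (hNs_low _)
    have hυ0 : ∀ n, 0 ≤ υ n := fun n => le_trans (norm_nonneg _) (hNu_low _)
    have hXle : ∀ n, ‖X n‖ ≤ σ n + υ n := by
      intro n
      calc ‖X n‖ = ‖(projS (X n) : Fin d → ℂ) + (projU (X n) : Fin d → ℂ)‖ := by rw [hadd]
        _ ≤ ‖(projS (X n) : Fin d → ℂ)‖ + ‖(projU (X n) : Fin d → ℂ)‖ := norm_add_le _ _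
        _ ≤ σ n + υ n := by
            apply add_le_add
            · rw [hnormS]; exact hNs_low _
            · rw [hnormU]; exact hNu_low _
    have hσup : ∀ n, σ n ≤ K * ‖X n‖ := by
      intro n
      calc σ n ≤ Ks * ‖projS (X n)‖ := hNs_up _
        _ = Ks * ‖(projS (X n) : Fin d → ℂ)‖ := by rw [hnormS]
        _ ≤ Ks * (CS * ‖X n‖) := mul_le_mul_of_nonneg_left (hCSle _) hKs0.le
        _ = (Ks * CS) * ‖X n‖ := by ring
        _ ≤ K * ‖X n‖ := mul_le_mul_of_nonneg_right (le_max_left _ _) (norm_nonneg _)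
    have hυup : ∀ n, υ n ≤ K * ‖X n‖ := by
      intro n
      calc υ n ≤ Ku * ‖projU (X n)‖ := hNu_up _
        _ = Ku * ‖(projU (X n) : Fin d → ℂ)‖ := by rw [hnormU]
        _ ≤ Ku * (CU * ‖X n‖) := mul_le_mul_of_nonneg_left (hCUle _) hKu0.le
        _ = (Ku * CU) * ‖X n‖ := by ring
        _ ≤ K * ‖X n‖ := mul_le_mul_of_nonneg_right (le_max_right _ _) (norm_nonneg _)
    have hrec : ∀ n, ∃ r, X (n + 1) = T (X n) + r ∧ ‖r‖ ≤ ε * ‖X n‖ := by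
      intro n
      refine ⟨incl (f (p + (f^[n] x - p)) - p - Df (f^[n] x - p)), ?_, ?_⟩
      · have hph : p + (f^[n] x - p) = f^[n] x := by abel
        have h1 : f^[n+1] x - p
            = Df (f^[n] x - p) + (f (p + (f^[n] x - p)) - p - Df (f^[n] x - p)) := by
          rw [Function.iterate_succ_apply' f n x, ← hph]
          abel
        show incl (f^[n+1] x - p) = T (incl (f^[n] x - p)) + _
        rw [h1, hincl_add, hTincl]
      · rw [hincl_norm, hXnorm]
        exact hrem _ (hxn n)
    have hσrec : ∀ n, σ (n + 1) ≤ lamS * σ n + (ε * K) * (σ n + υ n) := by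
      intro n
      obtain ⟨r, hXr, hrle⟩ := hrec n
      have h1 : projS (X (n + 1)) = aS (projS (X n)) + projS r := by
        rw [hXr, map_add, haSproj]
      have h2 : Ns (projS r) ≤ (ε * K) * (σ n + υ n) := by
        calc Ns (projS r) ≤ Ks * ‖projS r‖ := hNs_up _
          _ = Ks * ‖(projS r : Fin d → ℂ)‖ := by rw [hnormS]
          _ ≤ Ks * (CS * ‖r‖) := mul_le_mul_of_nonneg_left (hCSle _) hKs0.le
          _ = (Ks * CS) * ‖r‖ := by ring
          _ ≤ K * ‖r‖ := mul_le_mul_of_nonneg_right (le_max_left _ _) (norm_nonneg r)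
          _ ≤ K * (ε * ‖X n‖) := mul_le_mul_of_nonneg_left hrle hK0.le
          _ = (ε * K) * ‖X n‖ := by ring
          _ ≤ (ε * K) * (σ n + υ n) :=
              mul_le_mul_of_nonneg_left (hXle n) (mul_nonneg hε0.le hK0.le)
      calc σ (n + 1) = Ns (aS (projS (X n)) + projS r) := by
            rw [show σ (n + 1) = Ns (projS (X (n + 1))) from rfl, h1]
        _ ≤ Ns (aS (projS (X n))) + Ns (projS r) := hNs_add _ _
        _ ≤ lamS * σ n + (ε * K) * (σ n + υ n) := add_le_add (hNs_contr _) h2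
    have hυrec : ∀ n, lamU⁻¹ * υ n - (ε * K) * (σ n + υ n) ≤ υ (n + 1) := by
      intro n
      obtain ⟨r, hXr, hrle⟩ := hrec n
      have h1 : bU (projU (X n)) = projU (X (n + 1)) + (- projU r) := by
        have h0 : projU (X (n + 1)) = bU (projU (X n)) + projU r := by
          rw [hXr, map_add, hbUproj]
        rw [h0]; abel
      have h2 : Nu (projU r) ≤ (ε * K) * (σ n + υ n) := by
        calc Nu (projU r) ≤ Ku * ‖projU r‖ := hNu_up _
          _ = Ku * ‖(projU r : Fin d → ℂ)‖ := by rw [hnormU]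
          _ ≤ Ku * (CU * ‖r‖) := mul_le_mul_of_nonneg_left (hCUle _) hKu0.le
          _ = (Ku * CU) * ‖r‖ := by ring
          _ ≤ K * ‖r‖ := mul_le_mul_of_nonneg_right (le_max_right _ _) (norm_nonneg r)
          _ ≤ K * (ε * ‖X n‖) := mul_le_mul_of_nonneg_left hrle hK0.le
          _ = (ε * K) * ‖X n‖ := by ring
          _ ≤ (ε * K) * (σ n + υ n) :=
              mul_le_mul_of_nonneg_left (hXle n) (mul_nonneg hε0.le hK0.le)
      have h3 : Nu (bU (projU (X n))) ≤ υ (n + 1) + Nu (projU r) := by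
        rw [h1]
        calc Nu (projU (X (n + 1)) + - projU r)
            ≤ Nu (projU (X (n + 1))) + Nu (- projU r) := hNu_add _ _
          _ = υ (n + 1) + Nu (projU r) := by rw [hNu_neg]
      have h4 : υ n ≤ lamU * (υ (n + 1) + (ε * K) * (σ n + υ n)) := by
        calc υ n ≤ lamU * Nu (bU (projU (X n))) := hNu_exp _
          _ ≤ lamU * (υ (n + 1) + Nu (projU r)) := mul_le_mul_of_nonneg_left h3 hlU0.le
          _ ≤ _ := mul_le_mul_of_nonneg_left (by linarith) hlU0.le
      have h5 : lamU⁻¹ * υ n ≤ υ (n + 1) + (ε * K) * (σ n + υ n) := by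
        have h6 := mul_le_mul_of_nonneg_left h4 (inv_pos.mpr hlU0).le
        rwa [← mul_assoc, inv_mul_cancel₀ (ne_of_gt hlU0), one_mul] at h6
      linarith
    have hBound : ∀ n, υ n ≤ K * β := by
      intro n
      refine le_trans (hυup n) ?_
      apply mul_le_mul_of_nonneg_left _ hK0.le
      rw [hXnorm]; exact hxn n
    have hcone := aux_cone_lemma σ υ lamS (ε * K) (K * β) lamU⁻¹ hσ0 hυ0 hlS0.le
      (by positivity) hεK1 hεK2 hBound hσrec hυrec
    have hσgeom : ∀ n, σ n ≤ μfin ^ n * σ 0 := by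
      intro n
      induction n with
      | zero => simp
      | succ n ih =>
        calc σ (n + 1) ≤ μfin * σ n := (hcone n).2
          _ ≤ μfin * (μfin ^ n * σ 0) := mul_le_mul_of_nonneg_left ih hμ0.le
          _ = μfin ^ (n + 1) * σ 0 := by ring
    intro n
    have hfinal : ‖X n‖ ≤ 2 * σ n := by
      have h1 := hXle n
      have h2 := (hcone n).1
      linarith
    have hσ0le : σ 0 ≤ K * ‖x - p‖ := by
      have h1 := hσup 0
      rwa [hXnorm, Function.iterate_zero_apply] at h1
    have hpow : (0:ℝ) < μfin ^ n := pow_pos hμ0 n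
    calc ‖f^[n] x - p‖ = ‖X n‖ := (hXnorm n).symm
      _ ≤ 2 * σ n := hfinal
      _ ≤ 2 * (μfin ^ n * σ 0) := mul_le_mul_of_nonneg_left (hσgeom n) (by norm_num)
      _ ≤ 2 * (μfin ^ n * (K * ‖x - p‖)) := mul_le_mul_of_nonneg_left
            (mul_le_mul_of_nonneg_left hσ0le hpow.le) (by norm_num)
      _ = (2 * K) * (μfin ^ n * ‖x - p‖) := by ring
      _ ≤ (2 * K + 1) * (μfin ^ n * ‖x - p‖) := mul_le_mul_of_nonneg_right (by linarith)
            (mul_nonneg hpow.le (norm_nonneg _))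
      _ = (2 * K + 1) * μfin ^ n * ‖x - p‖ := by ring
  refine ⟨β, hβ0, 2 * K + 1, by linarith, μfin, hμ0, hεK1, main, ?_⟩
  intro z
  constructor
  · intro hz
    obtain ⟨N, hN⟩ := (Metric.tendsto_atTop.mp hz) β hβ0
    refine ⟨N, fun k => ?_⟩
    have h1 : f^[k] (f^[N] z) = f^[k + N] z := (Function.iterate_add_apply f k N z).symm
    rw [h1, ← dist_eq_norm]
    exact le_of_lt (hN (k + N) (Nat.le_add_left N k))
  · rintro ⟨N, hN⟩
    have h1 : Tendsto (fun n : ℕ => f^[n] (f^[N] z)) atTop (nhds p) := by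
      rw [tendsto_iff_norm_sub_tendsto_zero]
      apply squeeze_zero (fun n => norm_nonneg _) (fun n => main _ hN n)
      have h2 : Tendsto (fun n : ℕ => μfin ^ n) atTop (nhds 0) :=
        tendsto_pow_atTop_nhds_zero_of_lt_one hμ0.le hεK1
      have h3 := (h2.const_mul (2 * K + 1)).mul_const ‖f^[N] z - p‖
      simpa [mul_assoc] using h3
    have h4 : (fun n : ℕ => f^[n + N] z) = fun n : ℕ => f^[n] (f^[N] z) := by
      funext n
      exact Function.iterate_add_apply f n N z
    rw [← tendsto_add_atTop_iff_nat N]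
    rw [h4]
    exact h1
end
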